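/- arXiv:1508.04651 — 4 statements merged into one kernel-verified Lean document; each statement's English description precedes it below -/
import Mathlib

section
/- Let (A,B,C) be a bipartite normalized LR triple on V of diameter d ≥ 4, with Toeplitz parameters {α_i} for T and {β_i} for T⁻¹. Then α_{2i}² ≠ α_{2i−2}α_{2i+2} and β_{2i}² ≠ β_{2i−2}β_{2i+2} for 1 ≤ i ≤ d/2 − 1. -/
/-- A decomposition of `V` of diameter `d`: a sequence of one-dimensional subspaces
`sub 0, …, sub d` whose (direct) sum is `V`; by convention `sub i = ⊥` for `i > d`
(encoding `V_{-1} = 0` and `V_{d+1} = 0`). -/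
structure LRDecomp (F : Type*) [Field F] (V : Type*) [AddCommGroup V] [Module F V]
    (d : ℕ) where
  sub : ℕ → Submodule F V
  finrank_eq_one : ∀ i ≤ d, Module.finrank F (sub i) = 1
  eq_bot_of_gt : ∀ i, d < i → sub i = ⊥
  isInternal : DirectSum.IsInternal fun i : Fin (d + 1) => sub i.val

variable {F : Type*} [Field F] {V : Type*} [AddCommGroup V] [Module F V]

/-- `A` lowers the decomposition: `A V_i = V_{i-1}` for `0 ≤ i ≤ d` (with `V_{-1} = 0`). -/
def Lowers {d : ℕ} (A : Module.End F V) (D : LRDecomp F V d) : Prop :=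
  Submodule.map A (D.sub 0) = ⊥ ∧ ∀ i < d, Submodule.map A (D.sub (i + 1)) = D.sub i

/-- `B` raises the decomposition: `B V_i = V_{i+1}` for `0 ≤ i ≤ d` (with `V_{d+1} = 0`). -/
def Raises {d : ℕ} (B : Module.End F V) (D : LRDecomp F V d) : Prop :=
  ∀ i ≤ d, Submodule.map B (D.sub i) = D.sub (i + 1)

/-- `D` is the (A,B)-decomposition: it is lowered by `A` and raised by `B`. -/
def IsLRPairWith {d : ℕ} (A B : Module.End F V) (D : LRDecomp F V d) : Prop :=
  Lowers A D ∧ Raises B D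

/-- `(A,B,C)` is an LR triple of diameter `d`. -/
def IsLRTriple (d : ℕ) (A B C : Module.End F V) : Prop :=
  (∃ D : LRDecomp F V d, IsLRPairWith A B D) ∧
  (∃ D : LRDecomp F V d, IsLRPairWith B C D) ∧
  (∃ D : LRDecomp F V d, IsLRPairWith C A D)

/-- `X` is tridiagonal with respect to the decomposition `D`:
`X V_i ⊆ V_{i-1} + V_i + V_{i+1}` (note `V_{0-1} ⊔ V_0 = V_0` makes `ℕ`-subtraction correct). -/
def IsTridiagonal {d : ℕ} (X : Module.End F V) (D : LRDecomp F V d) : Prop :=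
  ∀ i, ∀ v ∈ D.sub i, X v ∈ D.sub (i - 1) ⊔ D.sub i ⊔ D.sub (i + 1)

/-- The tridiagonal space of the LR triple with decompositions `D₁, D₂, D₃`. -/
def tridiagSpace {d : ℕ} (D₁ D₂ D₃ : LRDecomp F V d) : Submodule F (Module.End F V) where
  carrier := {X | IsTridiagonal X D₁ ∧ IsTridiagonal X D₂ ∧ IsTridiagonal X D₃}
  add_mem' := by
    rintro X Y ⟨hX1, hX2, hX3⟩ ⟨hY1, hY2, hY3⟩
    exact ⟨fun i v hv => by simpa using add_mem (hX1 i v hv) (hY1 i v hv),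
           fun i v hv => by simpa using add_mem (hX2 i v hv) (hY2 i v hv),
           fun i v hv => by simpa using add_mem (hX3 i v hv) (hY3 i v hv)⟩
  zero_mem' :=
    ⟨fun i v _ => by simp,
     fun i v _ => by simp,
     fun i v _ => by simp⟩
  smul_mem' := by
    rintro c X ⟨hX1, hX2, hX3⟩
    exact ⟨fun i v hv => by simpa using Submodule.smul_mem _ c (hX1 i v hv),
           fun i v hv => by simpa using Submodule.smul_mem _ c (hX2 i v hv),
           fun i v hv => by simpa using Submodule.smul_mem _ c (hX3 i v hv)⟩

/-- `E` is the idempotent sequence of the decomposition `D`: each `E i` acts as the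
identity on `sub i` and as zero on `sub j` for `j ≠ i`. -/
def IsIdemSeq {d : ℕ} (D : LRDecomp F V d) (E : ℕ → Module.End F V) : Prop :=
  ∀ i, (∀ v ∈ D.sub i, E i v = v) ∧ ∀ j, j ≠ i → ∀ v ∈ D.sub j, E i v = 0

/-- Bipartite: all trace data `a_i = tr(C E_i)`, `a'_i = tr(A E'_i)`, `a''_i = tr(B E''_i)`
vanish, where `E, E', E''` are the idempotent data of the triple `(A,B,C)`. -/
def IsBipartite (d : ℕ) (A B C : Module.End F V)
    (E E' E'' : ℕ → Module.End F V) : Prop :=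
  ∀ i ≤ d, LinearMap.trace F V (C * E i) = 0 ∧
    LinearMap.trace F V (A * E' i) = 0 ∧ LinearMap.trace F V (B * E'' i) = 0

/-- An LR pair `(A,B)` has `q`-Weyl type. -/
def IsQWeylPair (q : F) (A B : Module.End F V) : Prop :=
  q ≠ 0 ∧ q ^ 2 ≠ 1 ∧ q • (A * B) - q⁻¹ • (B * A) = (q - q⁻¹) • (1 : Module.End F V)

/-- An LR triple `(A,B,C)` has `q`-Weyl type. -/
def IsQWeylTriple (q : F) (A B C : Module.End F V) : Prop :=
  IsQWeylPair q A B ∧ IsQWeylPair q B C ∧ IsQWeylPair q C A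

/-- `v` is an `(A,B)`-basis, relative to the `(A,B)`-decomposition `D`:
`v i ∈ sub i` is nonzero and `A v_i = v_{i-1}`. -/
def IsLRBasisFor {d : ℕ} (A : Module.End F V) (D : LRDecomp F V d) (v : ℕ → V) : Prop :=
  (∀ i ≤ d, v i ∈ D.sub i ∧ v i ≠ 0) ∧ ∀ i, 1 ≤ i → i ≤ d → A (v i) = v (i - 1)

/-- `v` is a `(B,A)`-style basis relative to the `(A,B)`-decomposition `D` of the
reversed pair: `v i ∈ sub (d-i)` is nonzero and the lowering map sends `v i ↦ v (i-1)`.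
(Used for `(C,B)`-bases relative to the `(B,C)`-decomposition, etc.) -/
def IsLRBasisRev {d : ℕ} (A : Module.End F V) (D : LRDecomp F V d) (v : ℕ → V) : Prop :=
  (∀ i ≤ d, v i ∈ D.sub (d - i) ∧ v i ≠ 0) ∧ ∀ i, 1 ≤ i → i ≤ d → A (v i) = v (i - 1)

/-- The transition matrix from the basis `u` to the basis `w` is upper triangular
Toeplitz with parameters `α`: `w j = ∑_{i ≤ j} α_{j-i} u_i`. -/
def IsToeplitzTransition (d : ℕ) (u w : ℕ → V) (α : ℕ → F) : Prop :=
  ∀ j ≤ d, w j = ∑ i ∈ Finset.range (j + 1), α (j - i) • u i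

/-- `φ` is the parameter sequence of the LR pair `(A,B)` with `(A,B)`-decomposition `D`:
`BA` acts on `V_i` as `φ i` for `1 ≤ i ≤ d`, with conventions `φ 0 = 0 = φ (d+1)`. -/
def IsParamSeq {d : ℕ} (A B : Module.End F V) (D : LRDecomp F V d) (φ : ℕ → F) : Prop :=
  φ 0 = 0 ∧ φ (d + 1) = 0 ∧ ∀ i, 1 ≤ i → i ≤ d → ∀ v ∈ D.sub i, B (A v) = φ i • v



namespace LRaux

open Submodule

variable {F : Type*} [Field F] {V : Type*} [AddCommGroup V] [Module F V] {d : ℕ}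

theorem top_eq (D : LRDecomp F V d) : (⊤ : Submodule F V) = ⨆ i : Fin (d + 1), D.sub i :=
  (D.isInternal.submodule_iSup_eq_top).symm

/-- span of the subspaces with index ≥ k -/
def Fhi (D : LRDecomp F V d) (k : ℕ) : Submodule F V :=
  ⨆ (i : Fin (d + 1)) (_ : k ≤ (i : ℕ)), D.sub i

/-- span of the subspaces with index ≤ k -/
def Flo (D : LRDecomp F V d) (k : ℕ) : Submodule F V :=
  ⨆ (i : Fin (d + 1)) (_ : (i : ℕ) ≤ k), D.sub i

theorem sub_le_Fhi (D : LRDecomp F V d) {k : ℕ} {i : Fin (d + 1)} (h : k ≤ (i : ℕ)) :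
    D.sub i ≤ Fhi D k :=
  le_iSup_of_le i (le_iSup (fun _ : k ≤ (i : ℕ) => D.sub i) h)

theorem sub_le_Flo (D : LRDecomp F V d) {k : ℕ} {i : Fin (d + 1)} (h : (i : ℕ) ≤ k) :
    D.sub i ≤ Flo D k :=
  le_iSup_of_le i (le_iSup (fun _ : (i : ℕ) ≤ k => D.sub i) h)

theorem sub_le_Fhi' (D : LRDecomp F V d) {k j : ℕ} (hj : j ≤ d) (h : k ≤ j) :
    D.sub j ≤ Fhi D k :=
  sub_le_Fhi D (i := ⟨j, by omega⟩) h

theorem sub_le_Flo' (D : LRDecomp F V d) {k j : ℕ} (hj : j ≤ d) (h : j ≤ k) :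
    D.sub j ≤ Flo D k :=
  sub_le_Flo D (i := ⟨j, by omega⟩) h

theorem Fhi_zero (D : LRDecomp F V d) : Fhi D 0 = ⊤ := by
  refine le_antisymm le_top ?_
  rw [top_eq D]
  exact iSup_le fun i => sub_le_Fhi D (Nat.zero_le _)

theorem Flo_ge (D : LRDecomp F V d) {k : ℕ} (h : d ≤ k) : Flo D k = ⊤ := by
  refine le_antisymm le_top ?_
  rw [top_eq D]
  exact iSup_le fun i => sub_le_Flo D (by omega)

theorem map_pow_raise {Y : Module.End F V} {D : LRDecomp F V d} (h : Raises Y D) :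
    ∀ (n j : ℕ), Submodule.map (Y ^ n) (D.sub j) = D.sub (j + n) := by
  intro n
  induction n with
  | zero => intro j; rw [pow_zero, Module.End.one_eq_id, Submodule.map_id]; congr 1
  | succ n ih =>
    intro j
    have h1 : Submodule.map Y (D.sub j) = D.sub (j + 1) := by
      rcases le_or_gt j d with hj | hj
      · exact h j hj
      · rw [D.eq_bot_of_gt j hj, Submodule.map_bot, D.eq_bot_of_gt (j + 1) (by omega)]
    rw [pow_succ, Module.End.mul_eq_comp, Submodule.map_comp, h1, ih (j + 1)]
    congr 1
    omega

theorem map_pow_lower {X : Module.End F V} {D : LRDecomp F V d} (h : Lowers X D) :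
    ∀ (n : ℕ), ∀ j ≤ d, Submodule.map (X ^ n) (D.sub j) =
      if n ≤ j then D.sub (j - n) else ⊥ := by
  intro n
  induction n with
  | zero => intro j hj; rw [pow_zero, Module.End.one_eq_id, Submodule.map_id]; simp
  | succ n ih =>
    intro j hj
    rw [pow_succ, Module.End.mul_eq_comp, Submodule.map_comp]
    match j with
    | 0 =>
      rw [h.1, Submodule.map_bot, if_neg (by omega)]
    | (k + 1) =>
      rw [h.2 k (by omega), ih k (by omega)]
      by_cases hnk : n ≤ k
      · rw [if_pos hnk, if_pos (by omega)]
        congr 1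
        omega
      · rw [if_neg hnk, if_neg (by omega)]

theorem map_pow_top_raise {Y : Module.End F V} {D : LRDecomp F V d} (h : Raises Y D) (k : ℕ) :
    Submodule.map (Y ^ k) ⊤ = Fhi D k := by
  rw [top_eq D, Submodule.map_iSup]
  refine le_antisymm (iSup_le fun i => ?_) (iSup_le fun i => iSup_le fun hki => ?_)
  · rw [map_pow_raise h k i]
    rcases le_or_gt ((i : ℕ) + k) d with hik | hik
    · exact sub_le_Fhi' D hik (by omega)
    · rw [D.eq_bot_of_gt _ hik]; exact bot_le
  · refine le_iSup_of_le ⟨(i : ℕ) - k, by omega⟩ ?_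
    rw [map_pow_raise h k]
    exact le_of_eq (by congr 1; simp only [Fin.val_mk]; omega)

theorem map_pow_top_lower {X : Module.End F V} {D : LRDecomp F V d} (h : Lowers X D)
    {k : ℕ} (hk : k ≤ d) : Submodule.map (X ^ k) ⊤ = Flo D (d - k) := by
  rw [top_eq D, Submodule.map_iSup]
  refine le_antisymm (iSup_le fun i => ?_) (iSup_le fun i => iSup_le fun hik => ?_)
  · rw [map_pow_lower h k i (by omega)]
    by_cases hki : k ≤ (i : ℕ)
    · rw [if_pos hki]
      exact sub_le_Flo' D (by omega) (by omega)
    · rw [if_neg hki]; exact bot_le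
  · refine le_iSup_of_le ⟨(i : ℕ) + k, by omega⟩ ?_
    have hv : ((⟨(i : ℕ) + k, by omega⟩ : Fin (d + 1)) : ℕ) = (i : ℕ) + k := rfl
    rw [map_pow_lower h k _ (by rw [hv]; omega), hv, if_pos (by omega)]
    exact le_of_eq (by congr 1; omega)

theorem map_raise_Flo {Y : Module.End F V} {D : LRDecomp F V d} (h : Raises Y D) (t : ℕ) :
    Submodule.map Y (Flo D t) ≤ Flo D (t + 1) := by
  rw [Flo, Submodule.map_iSup]
  refine iSup_le fun i => ?_
  rw [Submodule.map_iSup]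
  refine iSup_le fun hit => ?_
  rw [h i (by omega)]
  rcases le_or_gt ((i : ℕ) + 1) d with h1 | h1
  · exact sub_le_Flo' D h1 (by omega)
  · rw [D.eq_bot_of_gt _ h1]; exact bot_le

theorem map_lower_Fhi {X : Module.End F V} {D : LRDecomp F V d} (h : Lowers X D) (t : ℕ) :
    Submodule.map X (Fhi D t) ≤ Fhi D (t - 1) := by
  rw [Fhi, Submodule.map_iSup]
  refine iSup_le fun i => ?_
  rw [Submodule.map_iSup]
  refine iSup_le fun hti => ?_
  rcases hiv : (i : ℕ) with _ | m
  · rw [h.1]; exact bot_le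
  · have hid : (i : ℕ) ≤ d := by omega
    rw [h.2 m (by omega)]
    exact sub_le_Fhi' D (by omega) (by omega)


/-- For an LR triple `(A,B,C)`, `A` maps the `i`-th space of the `(B,C)`-decomposition
into the span of the `(i-1)`-th through `(i+1)`-th spaces. -/
theorem tridiag {A B C : Module.End F V} {DAB DBC DCA : LRDecomp F V d}
    (hAB : IsLRPairWith A B DAB) (hBC : IsLRPairWith B C DBC) (hCA : IsLRPairWith C A DCA) :
    ∀ t ≤ d, Submodule.map A (DBC.sub t) ≤ Fhi DBC (t - 1) ⊓ Flo DBC (t + 1) := by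
  intro t ht
  refine le_inf ?_ ?_
  · rcases Nat.eq_zero_or_pos t with h0 | h1
    · rw [h0]
      show Submodule.map A (DBC.sub 0) ≤ Fhi DBC (0 - 1)
      rw [Nat.zero_sub, Fhi_zero DBC]; exact le_top
    · have e1 : Fhi DBC t = Flo DCA (d - t) := by
        rw [← map_pow_top_raise hBC.2 t, map_pow_top_lower hCA.1 ht]
      have e2 : Fhi DBC (t - 1) = Flo DCA (d - (t - 1)) := by
        rw [← map_pow_top_raise hBC.2 (t - 1), map_pow_top_lower hCA.1 (by omega)]
      have step : Submodule.map A (Flo DCA (d - t)) ≤ Flo DCA (d - t + 1) :=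
        map_raise_Flo hCA.2 _
      have h3 : Submodule.map A (DBC.sub t) ≤ Submodule.map A (Flo DCA (d - t)) := by
        refine Submodule.map_mono ?_
        rw [← e1]
        exact sub_le_Fhi' DBC ht le_rfl
      refine h3.trans (step.trans ?_)
      rw [e2]
      have h4 : d - t + 1 = d - (t - 1) := by omega
      rw [h4]
  · rcases eq_or_lt_of_le ht with h0 | h1
    · rw [Flo_ge DBC (by omega)]; exact le_top
    · have e1 : Flo DBC t = Fhi DAB (d - t) := by
        rw [← map_pow_top_raise hAB.2 (d - t), map_pow_top_lower hBC.1 (by omega)]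
        congr 1
        omega
      have e2 : Flo DBC (t + 1) = Fhi DAB (d - t - 1) := by
        rw [← map_pow_top_raise hAB.2 (d - t - 1), map_pow_top_lower hBC.1 (by omega)]
        congr 1
        omega
      have step : Submodule.map A (Fhi DAB (d - t)) ≤ Fhi DAB (d - t - 1) :=
        map_lower_Fhi hAB.1 _
      have h3 : Submodule.map A (DBC.sub t) ≤ Submodule.map A (Fhi DAB (d - t)) := by
        refine Submodule.map_mono ?_
        rw [← e1]
        exact sub_le_Flo' DBC ht le_rfl
      refine h3.trans (step.trans ?_)
      rw [e2]

variable [FiniteDimensional F V]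

/-- a 1-dimensional piece is the span of any of its nonzero vectors -/
theorem sub_eq_span (D : LRDecomp F V d) {k : ℕ} (hk : k ≤ d) {x : V}
    (hx : x ∈ D.sub k) (hx0 : x ≠ 0) : D.sub k = F ∙ x := by
  have hle : (F ∙ x) ≤ D.sub k := by rwa [Submodule.span_singleton_le_iff_mem]
  refine (Submodule.eq_of_le_of_finrank_le hle ?_).symm
  rw [finrank_span_singleton hx0, D.finrank_eq_one k hk]

/-- a choice of nonzero vectors from the pieces (in a permuted order) is a basis -/
noncomputable def decompBasis (D : LRDecomp F V d) (v : ℕ → V) (e : Equiv.Perm (Fin (d + 1)))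
    (hv : ∀ i : Fin (d + 1), v (i : ℕ) ∈ D.sub ((e i : ℕ)))
    (hv0 : ∀ i : Fin (d + 1), v (i : ℕ) ≠ 0) : Module.Basis (Fin (d + 1)) F V := by
  refine Module.Basis.mk (v := fun i : Fin (d + 1) => v (i : ℕ)) ?_ ?_
  · exact iSupIndep.linearIndependent _ ((D.isInternal.submodule_iSupIndep).comp e.injective)
      hv hv0
  · rw [Submodule.span_range_eq_iSup]
    have h1 : ∀ i : Fin (d + 1), (F ∙ v (i : ℕ)) = D.sub ((e i : ℕ)) := fun i =>
      (sub_eq_span D (by omega) (hv i) (hv0 i)).symm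
    simp only [h1]
    rw [e.iSup_comp (g := fun i : Fin (d + 1) => D.sub (i : ℕ)), ← top_eq D]

theorem decompBasis_apply (D : LRDecomp F V d) (v : ℕ → V) (e : Equiv.Perm (Fin (d + 1)))
    (hv : ∀ i : Fin (d + 1), v (i : ℕ) ∈ D.sub ((e i : ℕ)))
    (hv0 : ∀ i : Fin (d + 1), v (i : ℕ) ≠ 0) (i : Fin (d + 1)) :
    decompBasis D v e hv hv0 i = v (i : ℕ) := by
  simp [decompBasis]

omit [FiniteDimensional F V] in
theorem trace_mul_idem (D : LRDecomp F V d) {E : ℕ → Module.End F V} (hE : IsIdemSeq D E)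
    (b : Module.Basis (Fin (d + 1)) F V) (e : Equiv.Perm (Fin (d + 1)))
    (hb : ∀ i : Fin (d + 1), b i ∈ D.sub ((e i : ℕ))) (X : Module.End F V) (k : Fin (d + 1)) :
    LinearMap.trace F V (X * E ((e k : ℕ))) = b.repr (X (b k)) k := by
  rw [LinearMap.trace_eq_matrix_trace F b, Matrix.trace]
  have hdiag : ∀ i : Fin (d + 1), Matrix.diag (LinearMap.toMatrix b b (X * E ((e k : ℕ)))) i
      = if i = k then b.repr (X (b k)) k else 0 := by
    intro i
    rw [Matrix.diag_apply, LinearMap.toMatrix_apply]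
    by_cases hik : i = k
    · subst hik
      rw [if_pos rfl, Module.End.mul_apply, (hE ((e i : ℕ))).1 (b i) (hb i)]
    · rw [if_neg hik, Module.End.mul_apply,
        (hE ((e k : ℕ))).2 ((e i : ℕ)) (fun hc => hik (e.injective (Fin.val_injective hc)))
          (b i) (hb i)]
      simp
  rw [Finset.sum_congr rfl fun i _ => hdiag i, Finset.sum_ite_eq' Finset.univ k
    (fun _ => b.repr (X (b k)) k), if_pos (Finset.mem_univ k)]

omit [FiniteDimensional F V] in
theorem sub_le_span_image (D : LRDecomp F V d) [FiniteDimensional F V]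
    (b : Module.Basis (Fin (d + 1)) F V) (e : Equiv.Perm (Fin (d + 1)))
    (hb : ∀ i : Fin (d + 1), b i ∈ D.sub ((e i : ℕ))) (S : Set (Fin (d + 1)))
    {i : Fin (d + 1)} (hi : e.symm i ∈ S) : D.sub (i : ℕ) ≤ Submodule.span F (b '' S) := by
  have h1 : D.sub (i : ℕ) = F ∙ b (e.symm i) := by
    refine sub_eq_span D (by omega) ?_ (b.ne_zero _)
    have := hb (e.symm i)
    rwa [e.apply_symm_apply] at this
  rw [h1]
  exact Submodule.span_mono (by simpa using Set.mem_image_of_mem b hi)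

theorem repr_eq_zero_of_mem_Fhi (D : LRDecomp F V d)
    (b : Module.Basis (Fin (d + 1)) F V) (e : Equiv.Perm (Fin (d + 1)))
    (hb : ∀ i : Fin (d + 1), b i ∈ D.sub ((e i : ℕ))) {v : V} {k : ℕ}
    (hv : v ∈ Fhi D k) {m : Fin (d + 1)} (hm : ((e m : ℕ)) < k) : b.repr v m = 0 := by
  have hle : Fhi D k ≤ Submodule.span F (b '' {i | k ≤ ((e i : ℕ))}) := by
    refine iSup_le fun i => iSup_le fun hki => ?_
    refine sub_le_span_image D b e hb _ ?_
    simp only [Set.mem_setOf_eq, e.apply_symm_apply]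
    exact hki
  have := (Module.Basis.mem_span_image b).1 (hle hv)
  by_contra hne
  have hmem : m ∈ (b.repr v).support := Finsupp.mem_support_iff.2 hne
  have := this hmem
  simp only [Set.mem_setOf_eq] at this
  omega

theorem repr_eq_zero_of_mem_Flo (D : LRDecomp F V d)
    (b : Module.Basis (Fin (d + 1)) F V) (e : Equiv.Perm (Fin (d + 1)))
    (hb : ∀ i : Fin (d + 1), b i ∈ D.sub ((e i : ℕ))) {v : V} {k : ℕ}
    (hv : v ∈ Flo D k) {m : Fin (d + 1)} (hm : k < ((e m : ℕ))) : b.repr v m = 0 := by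
  have hle : Flo D k ≤ Submodule.span F (b '' {i | ((e i : ℕ)) ≤ k}) := by
    refine iSup_le fun i => iSup_le fun hki => ?_
    refine sub_le_span_image D b e hb _ ?_
    simp only [Set.mem_setOf_eq, e.apply_symm_apply]
    exact hki
  have := (Module.Basis.mem_span_image b).1 (hle hv)
  by_contra hne
  have hmem : m ∈ (b.repr v).support := Finsupp.mem_support_iff.2 hne
  have := this hmem
  simp only [Set.mem_setOf_eq] at this
  omega

/-- `ℕ`-indexed coordinates with respect to a `Fin (d+1)`-indexed basis. -/
noncomputable def coordFn (b : Module.Basis (Fin (d + 1)) F V) (v : V) (m : ℕ) : F :=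
  if h : m < d + 1 then b.repr v ⟨m, h⟩ else 0

omit [FiniteDimensional F V] in
theorem coordFn_zero (b : Module.Basis (Fin (d + 1)) F V) (m : ℕ) : coordFn b 0 m = 0 := by
  unfold coordFn
  split <;> simp

omit [FiniteDimensional F V] in
theorem coordFn_smul (b : Module.Basis (Fin (d + 1)) F V) (r : F) (v : V) (m : ℕ) :
    coordFn b (r • v) m = r * coordFn b v m := by
  unfold coordFn
  split <;> simp

omit [FiniteDimensional F V] in
theorem coordFn_fin (b : Module.Basis (Fin (d + 1)) F V) (v : V) (m : Fin (d + 1)) :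
    coordFn b v (m : ℕ) = b.repr v m := by
  unfold coordFn
  rw [dif_pos m.isLt]

omit [FiniteDimensional F V] in
theorem coordFn_sum_expansion (b : Module.Basis (Fin (d + 1)) F V) (x : ℕ → V)
    (hbx : ∀ i : Fin (d + 1), b i = x (i : ℕ)) (f : ℕ → F) {t : ℕ} (ht : t ≤ d) (m : ℕ) :
    coordFn b (∑ i ∈ Finset.range (t + 1), f i • x i) m = if m ≤ t then f m else 0 := by
  unfold coordFn
  split
  next h =>
    rw [map_sum, Finsupp.finset_sum_apply]
    have hterm : ∀ i ∈ Finset.range (t + 1),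
        b.repr (f i • x i) ⟨m, h⟩ = if i = m then f i else 0 := by
      intro i hi
      rw [Finset.mem_range] at hi
      have hx : x i = b ⟨i, by omega⟩ := (hbx ⟨i, by omega⟩).symm
      rw [map_smul, hx, b.repr_self, Finsupp.smul_apply, Finsupp.single_apply]
      by_cases him : i = m
      · subst him
        rw [if_pos (by rfl), if_pos rfl]
        simp
      · rw [if_neg (by simp [Fin.mk.injEq]; omega), if_neg him]
        simp
    rw [Finset.sum_congr rfl hterm, Finset.sum_ite_eq' (Finset.range (t + 1)) m f]
    simp only [Finset.mem_range]
    by_cases hmt : m ≤ t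
    · rw [if_pos (by omega), if_pos hmt]
    · rw [if_neg (by omega), if_neg hmt]
  next h =>
    rw [if_neg (by omega)]

omit [FiniteDimensional F V] in
theorem coordFn_finset_sum (b : Module.Basis (Fin (d + 1)) F V) {ι : Type*} (s : Finset ι)
    (v : ι → V) (m : ℕ) : coordFn b (∑ i ∈ s, v i) m = ∑ i ∈ s, coordFn b (v i) m := by
  unfold coordFn
  split
  · rw [map_sum, Finsupp.finset_sum_apply]
  · simp

omit [FiniteDimensional F V] in
/-- The key coefficient identity obtained by computing `X (y j)` in two ways in the
basis `x`, where `y j = ∑ γ_{j-i} x_i`, `X` raises the `y`-chain with scalars `r`,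
and `X` is tridiagonal with zero diagonal on the `x`-basis. -/
theorem side_identity (b : Module.Basis (Fin (d + 1)) F V) (x y : ℕ → V) (γ r : ℕ → F)
    (X : Module.End F V)
    (hbx : ∀ i : Fin (d + 1), b i = x (i : ℕ))
    (hexp : ∀ j ≤ d, y j = ∑ i ∈ Finset.range (j + 1), γ (j - i) • x i)
    (hXy : ∀ j, j < d → X (y j) = r j • y (j + 1))
    (hXyd : X (y d) = 0) (hrd : r d = 0)
    (hlow : ∀ i ≤ d, ∀ m : ℕ, m + 1 < i → coordFn b (X (x i)) m = 0)
    (hhigh : ∀ i ≤ d, ∀ m : ℕ, i + 1 < m → coordFn b (X (x i)) m = 0)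
    (hdiag : ∀ i ≤ d, coordFn b (X (x i)) i = 0) :
    ∀ j ≤ d, ∀ m ≤ d,
      (if m + 1 ≤ j then γ (j - (m + 1)) * coordFn b (X (x (m + 1))) m else 0)
      + (if 1 ≤ m ∧ m ≤ j + 1 then γ (j + 1 - m) * coordFn b (X (x (m - 1))) m else 0)
      = if m ≤ j + 1 then r j * γ (j + 1 - m) else 0 := by
  intro j hj m hm
  set g : ℕ → F := fun i => γ (j - i) * coordFn b (X (x i)) m with hg
  have stepA : coordFn b (X (y j)) m = ∑ i ∈ Finset.range (j + 1), g i := by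
    rw [hexp j hj, map_sum, coordFn_finset_sum]
    refine Finset.sum_congr rfl fun i _ => ?_
    rw [map_smul, coordFn_smul]
  have stepB : coordFn b (X (y j)) m = if m ≤ j + 1 then r j * γ (j + 1 - m) else 0 := by
    rcases lt_or_eq_of_le hj with hjd | hjd
    · rw [hXy j hjd, coordFn_smul, hexp (j + 1) (by omega),
        coordFn_sum_expansion b x hbx _ (by omega) m]
      by_cases hmj : m ≤ j + 1
      · rw [if_pos hmj, if_pos hmj]
      · rw [if_neg hmj, if_neg hmj, mul_zero]
    · subst hjd
      rw [hXyd, coordFn_zero, if_pos (by omega), hrd, zero_mul]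
  have hpt : ∀ i ∈ Finset.range (j + 1),
      g i = (if i = m + 1 then g i else 0) + (if 1 ≤ m ∧ i = m - 1 then g i else 0) := by
    intro i hi
    rw [Finset.mem_range] at hi
    by_cases h1 : i = m + 1
    · rw [if_pos h1, if_neg (by omega), add_zero]
    · by_cases h2 : 1 ≤ m ∧ i = m - 1
      · rw [if_neg h1, if_pos h2, zero_add]
      · rw [if_neg h1, if_neg h2, add_zero]
        have hzero : coordFn b (X (x i)) m = 0 := by
          have hcases : i = m ∨ m + 1 < i ∨ i + 1 < m := by omega
          rcases hcases with h | h | h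
          · subst h; exact hdiag i (by omega)
          · exact hlow i (by omega) m h
          · exact hhigh i (by omega) m h
        rw [hg]
        simp only [hzero, mul_zero]
    
  have stepC : ∑ i ∈ Finset.range (j + 1), g i
      = (if m + 1 ≤ j then γ (j - (m + 1)) * coordFn b (X (x (m + 1))) m else 0)
      + (if 1 ≤ m ∧ m ≤ j + 1 then γ (j + 1 - m) * coordFn b (X (x (m - 1))) m else 0) := by
    rw [Finset.sum_congr rfl hpt, Finset.sum_add_distrib]
    congr 1
    · rw [Finset.sum_ite_eq' (Finset.range (j + 1)) (m + 1) g]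
      simp only [Finset.mem_range]
      by_cases hc : m + 1 ≤ j
      · rw [if_pos (by omega), if_pos hc]
      · rw [if_neg (by omega), if_neg hc]
    · by_cases hm1 : 1 ≤ m
      · simp only [hm1, true_and]
        rw [Finset.sum_ite_eq' (Finset.range (j + 1)) (m - 1) g]
        simp only [Finset.mem_range]
        by_cases hc : m ≤ j + 1
        · rw [if_pos (by omega), if_pos hc]
          show γ (j - (m - 1)) * coordFn b (X (x (m - 1))) m = _
          have heq : j - (m - 1) = j + 1 - m := by omega
          rw [heq]
        · rw [if_neg (by omega), if_neg hc]
      · simp only [hm1, false_and, if_false, Finset.sum_const_zero]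
  rw [← stepC, ← stepA, stepB]

section Scalar

variable {K : Type*} [Field K] {d : ℕ} (γ r : ℕ → K) (c : ℕ → ℕ → K)

/-- `c j (j+1) = r j`, extracted from the coefficient identity. -/
theorem scalar_cq (hγ0 : γ 0 = 1)
    (I : ∀ j ≤ d, ∀ m ≤ d,
      (if m + 1 ≤ j then γ (j - (m + 1)) * c (m + 1) m else 0)
      + (if 1 ≤ m ∧ m ≤ j + 1 then γ (j + 1 - m) * c (m - 1) m else 0)
      = if m ≤ j + 1 then r j * γ (j + 1 - m) else 0) :
    ∀ j m, j + 1 = m → m ≤ d → c j m = r j := by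
  intro j m hjm hmd
  subst hjm
  have h1 := I j (by omega) (j + 1) (by omega)
  rw [if_neg (by omega), if_pos ⟨by omega, le_rfl⟩, if_pos (by omega)] at h1
  have e1 : j + 1 - (j + 1) = 0 := by omega
  rw [e1, hγ0, mul_one, one_mul, zero_add] at h1
  rwa [Nat.add_sub_cancel] at h1

theorem scalar_one (hd : 2 ≤ d) (hγ0 : γ 0 = 1)
    (hr : ∀ j, j < d → r j ≠ 0) (hrd : r d = 0)
    (I : ∀ j ≤ d, ∀ m ≤ d,
      (if m + 1 ≤ j then γ (j - (m + 1)) * c (m + 1) m else 0)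
      + (if 1 ≤ m ∧ m ≤ j + 1 then γ (j + 1 - m) * c (m - 1) m else 0)
      = if m ≤ j + 1 then r j * γ (j + 1 - m) else 0) :
    γ 1 = 0 := by
  have hQ := scalar_cq γ r c hγ0 I (d - 1) d (by omega) le_rfl
  have h1 := I d le_rfl d le_rfl
  rw [if_neg (by omega), if_pos ⟨by omega, by omega⟩, if_pos (by omega)] at h1
  have e1 : d + 1 - d = 1 := by omega
  rw [e1, hrd, zero_mul, zero_add, hQ] at h1
  exact (mul_eq_zero.1 h1).resolve_right (hr (d - 1) (by omega))

theorem scalar_main (hd : 4 ≤ d)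
    (hγ0 : γ 0 = 1) (hγ2 : γ 2 ≠ 0)
    (hr : ∀ j, j < d → r j ≠ 0) (hrd : r d = 0)
    (I : ∀ j ≤ d, ∀ m ≤ d,
      (if m + 1 ≤ j then γ (j - (m + 1)) * c (m + 1) m else 0)
      + (if 1 ≤ m ∧ m ≤ j + 1 then γ (j + 1 - m) * c (m - 1) m else 0)
      = if m ≤ j + 1 then r j * γ (j + 1 - m) else 0)
    {n : ℕ} (hn : 1 ≤ n) (hnd : 2 * n + 2 ≤ d) :
    γ (2 * n) ^ 2 ≠ γ (2 * n - 2) * γ (2 * n + 2) := by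
  have hQ := scalar_cq γ r c hγ0 I
  -- P 1 = r 1 * γ 2
  have hP1 : c 1 0 = r 1 * γ 2 := by
    have h1 := I 1 (by omega) 0 (by omega)
    rw [if_pos (by omega), if_neg (by omega), if_pos (by omega)] at h1
    norm_num at h1
    rwa [hγ0, one_mul] at h1
  have hP1ne : c 1 0 ≠ 0 := by
    rw [hP1]
    exact mul_ne_zero (hr 1 (by omega)) hγ2
  -- the chain relation
  have hchain : ∀ t, 2 * t + 1 ≤ d → γ (2 * t) * c 1 0 = r (2 * t + 1) * γ (2 * t + 2) := by
    intro t ht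
    have h1 := I (2 * t + 1) (by omega) 0 (by omega)
    rw [if_pos (by omega), if_neg (by omega), if_pos (by omega)] at h1
    have e1 : 2 * t + 1 - (0 + 1) = 2 * t := by omega
    have e2 : 2 * t + 1 + 1 - 0 = 2 * t + 2 := by omega
    rw [e1, e2, add_zero] at h1
    have e3 : (0 : ℕ) + 1 = 1 := rfl
    rwa [e3] at h1
  -- nonvanishing of the even γ's
  have hkey : ∀ t, 2 * t ≤ d → γ (2 * t) ≠ 0 := by
    intro t
    induction t with
    | zero => intro _; rw [show 2 * 0 = 0 by rfl, hγ0]; exact one_ne_zero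
    | succ t ih =>
      intro ht
      have h1 := hchain t (by omega)
      have hlhs : γ (2 * t) * c 1 0 ≠ 0 := mul_ne_zero (ih (by omega)) hP1ne
      rw [h1] at hlhs
      have := right_ne_zero_of_mul hlhs
      rwa [show 2 * (t + 1) = 2 * t + 2 by omega]
  -- instance E3 : j = d, m = d - 2n - 1
  have E3 : γ (2 * n) * c (d - 2 * n) (d - 2 * n - 1)
      + γ (2 * n + 2) * r (d - 2 * n - 2) = 0 := by
    have h1 := I d le_rfl (d - 2 * n - 1) (by omega)
    rw [if_pos (by omega), if_pos ⟨by omega, by omega⟩, if_pos (by omega)] at h1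
    have e2 : d - 2 * n - 1 + 1 = d - 2 * n := by omega
    rw [e2] at h1
    have e1 : d - (d - 2 * n) = 2 * n := by omega
    have e3 : d + 1 - (d - 2 * n - 1) = 2 * n + 2 := by omega
    have e4 : d - 2 * n - 1 - 1 = d - 2 * n - 2 := by omega
    rw [e1, e3, e4, hrd, zero_mul,
      hQ (d - 2 * n - 2) (d - 2 * n - 1) (by omega) (by omega)] at h1
    exact h1
  -- instance E4 : j = d - 2, m = d - 2n - 1
  have E4 : γ (2 * n - 2) * c (d - 2 * n) (d - 2 * n - 1)
      + γ (2 * n) * r (d - 2 * n - 2) = r (d - 2) * γ (2 * n) := by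
    have h1 := I (d - 2) (by omega) (d - 2 * n - 1) (by omega)
    rw [if_pos (by omega), if_pos ⟨by omega, by omega⟩, if_pos (by omega)] at h1
    have e2 : d - 2 * n - 1 + 1 = d - 2 * n := by omega
    rw [e2] at h1
    have e1 : d - 2 - (d - 2 * n) = 2 * n - 2 := by omega
    have e3 : d - 2 + 1 - (d - 2 * n - 1) = 2 * n := by omega
    have e4 : d - 2 * n - 1 - 1 = d - 2 * n - 2 := by omega
    rw [e1, e3, e4,
      hQ (d - 2 * n - 2) (d - 2 * n - 1) (by omega) (by omega)] at h1
    exact h1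
  -- endgame
  intro h
  have hz : r (d - 2) * γ (2 * n) ^ 2 = 0 := by
    linear_combination γ (2 * n - 2) * E3 - γ (2 * n) * E4 + r (d - 2 * n - 2) * h
  have hne : γ (2 * n) ^ 2 ≠ 0 := pow_ne_zero _ (hkey n (by omega))
  exact (mul_ne_zero (hr (d - 2) (by omega)) hne) hz

end Scalar

omit [FiniteDimensional F V] in
theorem coordFn_add (b : Module.Basis (Fin (d + 1)) F V) (v w : V) (m : ℕ) :
    coordFn b (v + w) m = coordFn b v m + coordFn b w m := by
  unfold coordFn
  split <;> simp


end LRaux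

open LRaux

theorem stmt12
    {F : Type*} [Field F] {V : Type*} [AddCommGroup V] [Module F V]
    [FiniteDimensional F V] {d : ℕ} (hdim : Module.finrank F V = d + 1)
    (A B C : Module.End F V) (DAB DBC DCA : LRDecomp F V d)
    (hAB : IsLRPairWith A B DAB) (hBC : IsLRPairWith B C DBC) (hCA : IsLRPairWith C A DCA)
    (hd : 4 ≤ d)
    (E E' E'' : ℕ → Module.End F V)
    (hE : IsIdemSeq DAB E) (hE' : IsIdemSeq DBC E') (hE'' : IsIdemSeq DCA E'')
    (hbip : IsBipartite d A B C E E' E'')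
    (u₁ w₁ u₂ w₂ u₃ w₃ : ℕ → V) (α α' α'' : ℕ → F)
    (hu₁ : IsLRBasisRev C DBC u₁) (hw₁ : IsLRBasisFor C DCA w₁) (hc₁ : u₁ 0 = w₁ 0)
    (hα : IsToeplitzTransition d u₁ w₁ α)
    (hu₂ : IsLRBasisRev A DCA u₂) (hw₂ : IsLRBasisFor A DAB w₂) (hc₂ : u₂ 0 = w₂ 0)
    (hα' : IsToeplitzTransition d u₂ w₂ α')
    (hu₃ : IsLRBasisRev B DAB u₃) (hw₃ : IsLRBasisFor B DBC w₃) (hc₃ : u₃ 0 = w₃ 0)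
    (hα'' : IsToeplitzTransition d u₃ w₃ α'')
    (hnorm : α 2 = 1 ∧ α' 2 = 1 ∧ α'' 2 = 1)
    (β : ℕ → F) (hβ : IsToeplitzTransition d w₁ u₁ β) :
    ∀ i, 1 ≤ i → i ≤ d / 2 - 1 →
      α (2 * i) ^ 2 ≠ α (2 * i - 2) * α (2 * i + 2) ∧
      β (2 * i) ^ 2 ≠ β (2 * i - 2) * β (2 * i + 2) := by
  classical
  obtain ⟨hnα, -, -⟩ := hnorm
  have hu := hu₁.1
  have hw := hw₁.1
  -- reversal permutation bookkeeping
  have hrev : ∀ (m : ℕ) (h : m < d + 1),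
      ((Fin.revPerm (⟨m, h⟩ : Fin (d + 1)) : Fin (d + 1)) : ℕ) = d - m := by
    intro m h
    simp only [Fin.revPerm_apply, Fin.val_rev]
    omega
  -- the two bases
  have humem : ∀ i : Fin (d + 1), u₁ (i : ℕ) ∈ DBC.sub ((Fin.revPerm i : Fin (d + 1)) : ℕ) := by
    intro i
    rw [hrev (i : ℕ) i.isLt]
    exact (hu (i : ℕ) (by omega)).1
  have hune : ∀ i : Fin (d + 1), u₁ (i : ℕ) ≠ 0 := fun i => (hu (i : ℕ) (by omega)).2
  set Bu : Module.Basis (Fin (d + 1)) F V := decompBasis DBC u₁ Fin.revPerm humem hune with hBudef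
  have hBu : ∀ i : Fin (d + 1), Bu i = u₁ (i : ℕ) :=
    fun i => decompBasis_apply DBC u₁ Fin.revPerm humem hune i
  have hbumem : ∀ i : Fin (d + 1), Bu i ∈ DBC.sub ((Fin.revPerm i : Fin (d + 1)) : ℕ) := by
    intro i; rw [hBu i]; exact humem i
  have hwmem : ∀ i : Fin (d + 1), w₁ (i : ℕ) ∈ DCA.sub ((Equiv.refl (Fin (d + 1)) i : Fin (d + 1)) : ℕ) :=
    fun i => (hw (i : ℕ) (by omega)).1
  have hwne : ∀ i : Fin (d + 1), w₁ (i : ℕ) ≠ 0 := fun i => (hw (i : ℕ) (by omega)).2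
  set Bw : Module.Basis (Fin (d + 1)) F V := decompBasis DCA w₁ (Equiv.refl _) hwmem hwne with hBwdef
  have hBw : ∀ i : Fin (d + 1), Bw i = w₁ (i : ℕ) :=
    fun i => decompBasis_apply DCA w₁ (Equiv.refl _) hwmem hwne i
  have hbwmem : ∀ i : Fin (d + 1), Bw i ∈ DCA.sub ((Equiv.refl (Fin (d + 1)) i : Fin (d + 1)) : ℕ) := by
    intro i; rw [hBw i]; exact hwmem i
  -- the raising scalars r for A on the w-chain
  have hAwmem : ∀ j ≤ d, A (w₁ j) ∈ DCA.sub (j + 1) := by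
    intro j hj
    rw [← hCA.2 j hj]
    exact Submodule.mem_map_of_mem (hw j hj).1
  have hAwd : A (w₁ d) = 0 := by
    have h1 := hAwmem d le_rfl
    rwa [DCA.eq_bot_of_gt (d + 1) (by omega), Submodule.mem_bot] at h1
  have hAw : ∀ j, j < d → ∃ t : F, A (w₁ j) = t • w₁ (j + 1) ∧ t ≠ 0 := by
    intro j hj
    have hmem := hAwmem j (le_of_lt hj)
    rw [sub_eq_span DCA (by omega) (hw (j + 1) (by omega)).1 (hw (j + 1) (by omega)).2,
      Submodule.mem_span_singleton] at hmem
    obtain ⟨t, ht⟩ := hmem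
    refine ⟨t, ht.symm, ?_⟩
    rintro rfl
    rw [zero_smul] at ht
    have hbot : DCA.sub (j + 1) = ⊥ := by
      rw [← hCA.2 j (by omega), sub_eq_span DCA (by omega) (hw j (by omega)).1
        (hw j (by omega)).2, Submodule.map_span, Set.image_singleton, ← ht,
        Submodule.span_zero_singleton]
    have h1 := DCA.finrank_eq_one (j + 1) (by omega)
    rw [hbot, finrank_bot] at h1
    exact absurd h1 (by omega)
  set r : ℕ → F := fun j => if h : j < d then (hAw j h).choose else 0 with hrdef
  have hrspec : ∀ j, j < d → A (w₁ j) = r j • w₁ (j + 1) ∧ r j ≠ 0 := by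
    intro j hj
    simp only [hrdef, dif_pos hj]
    exact (hAw j hj).choose_spec
  have hrd : r d = 0 := by simp [hrdef]
  -- the raising scalars bb for B on the u-chain
  have hBumap : ∀ j, j < d → Submodule.map B (DBC.sub (d - j)) = DBC.sub (d - (j + 1)) := by
    intro j hj
    have h1 := hBC.1.2 (d - (j + 1)) (by omega)
    rwa [show d - (j + 1) + 1 = d - j by omega] at h1
  have hBumem : ∀ j, j < d → B (u₁ j) ∈ DBC.sub (d - (j + 1)) := by
    intro j hj
    rw [← hBumap j hj]
    exact Submodule.mem_map_of_mem (hu j (by omega)).1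
  have hBud : B (u₁ d) = 0 := by
    have h1 : B (u₁ d) ∈ Submodule.map B (DBC.sub 0) :=
      Submodule.mem_map_of_mem (by simpa [Nat.sub_self] using (hu d le_rfl).1)
    rw [hBC.1.1, Submodule.mem_bot] at h1
    exact h1
  have hBu' : ∀ j, j < d → ∃ t : F, B (u₁ j) = t • u₁ (j + 1) ∧ t ≠ 0 := by
    intro j hj
    have hmem := hBumem j hj
    rw [sub_eq_span DBC (by omega) (hu (j + 1) (by omega)).1 (hu (j + 1) (by omega)).2,
      Submodule.mem_span_singleton] at hmem
    obtain ⟨t, ht⟩ := hmem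
    refine ⟨t, ht.symm, ?_⟩
    rintro rfl
    rw [zero_smul] at ht
    have hbot : DBC.sub (d - (j + 1)) = ⊥ := by
      rw [← hBumap j hj, sub_eq_span DBC (by omega) (hu j (by omega)).1
        (hu j (by omega)).2, Submodule.map_span, Set.image_singleton, ← ht,
        Submodule.span_zero_singleton]
    have h1 := DBC.finrank_eq_one (d - (j + 1)) (by omega)
    rw [hbot, finrank_bot] at h1
    exact absurd h1 (by omega)
  set bb : ℕ → F := fun j => if h : j < d then (hBu' j h).choose else 0 with hbbdef
  have hbbspec : ∀ j, j < d → B (u₁ j) = bb j • u₁ (j + 1) ∧ bb j ≠ 0 := by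
    intro j hj
    simp only [hbbdef, dif_pos hj]
    exact (hBu' j hj).choose_spec
  have hbbd : bb d = 0 := by simp [hbbdef]
  -- tridiagonality with zero diagonal : A-side coefficients
  have htriA := tridiag hAB hBC hCA
  have hlowA : ∀ i ≤ d, ∀ m : ℕ, m + 1 < i → coordFn Bu (A (u₁ i)) m = 0 := by
    intro i hi m hm
    have hmd : m < d + 1 := by omega
    have hmem : A (u₁ i) ∈ Flo DBC (d - i + 1) := by
      have h1 : A (u₁ i) ∈ Submodule.map A (DBC.sub (d - i)) :=
        Submodule.mem_map_of_mem (hu i hi).1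
      exact ((htriA (d - i) (by omega)).trans inf_le_right) h1
    have h2 := repr_eq_zero_of_mem_Flo DBC Bu Fin.revPerm hbumem hmem
      (m := ⟨m, hmd⟩) (by rw [hrev m hmd]; omega)
    have h3 : coordFn Bu (A (u₁ i)) m = Bu.repr (A (u₁ i)) ⟨m, hmd⟩ :=
      coordFn_fin Bu (A (u₁ i)) ⟨m, hmd⟩
    rw [h3, h2]
  have hhighA : ∀ i ≤ d, ∀ m : ℕ, i + 1 < m → coordFn Bu (A (u₁ i)) m = 0 := by
    intro i hi m hm
    by_cases hmd : m < d + 1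
    · have hmem : A (u₁ i) ∈ Fhi DBC (d - i - 1) := by
        have h1 : A (u₁ i) ∈ Submodule.map A (DBC.sub (d - i)) :=
          Submodule.mem_map_of_mem (hu i hi).1
        exact ((htriA (d - i) (by omega)).trans inf_le_left) h1
      have h2 := repr_eq_zero_of_mem_Fhi DBC Bu Fin.revPerm hbumem hmem
        (m := ⟨m, hmd⟩) (by rw [hrev m hmd]; omega)
      have h3 : coordFn Bu (A (u₁ i)) m = Bu.repr (A (u₁ i)) ⟨m, hmd⟩ :=
        coordFn_fin Bu (A (u₁ i)) ⟨m, hmd⟩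
      rw [h3, h2]
    · exact dif_neg hmd
  have hdiagA : ∀ i ≤ d, coordFn Bu (A (u₁ i)) i = 0 := by
    intro i hi
    have hid : i < d + 1 := by omega
    have h1 := trace_mul_idem DBC hE' Bu Fin.revPerm hbumem A ⟨i, hid⟩
    rw [hrev i hid] at h1
    have h2 := (hbip (d - i) (by omega)).2.1
    rw [h2] at h1
    have h4 : Bu (⟨i, hid⟩ : Fin (d + 1)) = u₁ i := hBu ⟨i, hid⟩
    rw [h4] at h1
    have h3 : coordFn Bu (A (u₁ i)) i = Bu.repr (A (u₁ i)) ⟨i, hid⟩ :=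
      coordFn_fin Bu (A (u₁ i)) ⟨i, hid⟩
    rw [h3, ← h1]
  have Iα := side_identity Bu u₁ w₁ α r A hBu hα (fun j hj => (hrspec j hj).1) hAwd hrd
    hlowA hhighA hdiagA
  -- tridiagonality with zero diagonal : B-side coefficients
  have htriB := tridiag hBC hCA hAB
  have hreflv : ∀ (m : ℕ) (h : m < d + 1),
      ((Equiv.refl (Fin (d + 1)) (⟨m, h⟩ : Fin (d + 1)) : Fin (d + 1)) : ℕ) = m := fun _ _ => rfl
  have hlowB : ∀ i ≤ d, ∀ m : ℕ, m + 1 < i → coordFn Bw (B (w₁ i)) m = 0 := by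
    intro i hi m hm
    have hmd : m < d + 1 := by omega
    have hmem : B (w₁ i) ∈ Fhi DCA (i - 1) := by
      have h1 : B (w₁ i) ∈ Submodule.map B (DCA.sub i) :=
        Submodule.mem_map_of_mem (hw i hi).1
      exact ((htriB i hi).trans inf_le_left) h1
    have h2 := repr_eq_zero_of_mem_Fhi DCA Bw (Equiv.refl _) hbwmem hmem
      (m := ⟨m, hmd⟩) (by rw [hreflv m hmd]; omega)
    have h3 : coordFn Bw (B (w₁ i)) m = Bw.repr (B (w₁ i)) ⟨m, hmd⟩ :=
      coordFn_fin Bw (B (w₁ i)) ⟨m, hmd⟩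
    rw [h3, h2]
  have hhighB : ∀ i ≤ d, ∀ m : ℕ, i + 1 < m → coordFn Bw (B (w₁ i)) m = 0 := by
    intro i hi m hm
    by_cases hmd : m < d + 1
    · have hmem : B (w₁ i) ∈ Flo DCA (i + 1) := by
        have h1 : B (w₁ i) ∈ Submodule.map B (DCA.sub i) :=
          Submodule.mem_map_of_mem (hw i hi).1
        exact ((htriB i hi).trans inf_le_right) h1
      have h2 := repr_eq_zero_of_mem_Flo DCA Bw (Equiv.refl _) hbwmem hmem
        (m := ⟨m, hmd⟩) (by rw [hreflv m hmd]; omega)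
      have h3 : coordFn Bw (B (w₁ i)) m = Bw.repr (B (w₁ i)) ⟨m, hmd⟩ :=
        coordFn_fin Bw (B (w₁ i)) ⟨m, hmd⟩
      rw [h3, h2]
    · exact dif_neg hmd
  have hdiagB : ∀ i ≤ d, coordFn Bw (B (w₁ i)) i = 0 := by
    intro i hi
    have hid : i < d + 1 := by omega
    have h1 := trace_mul_idem DCA hE'' Bw (Equiv.refl _) hbwmem B ⟨i, hid⟩
    rw [hreflv i hid] at h1
    have h2 := (hbip i (by omega)).2.2
    rw [h2] at h1
    have h4 : Bw (⟨i, hid⟩ : Fin (d + 1)) = w₁ i := hBw ⟨i, hid⟩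
    rw [h4] at h1
    have h3 : coordFn Bw (B (w₁ i)) i = Bw.repr (B (w₁ i)) ⟨i, hid⟩ :=
      coordFn_fin Bw (B (w₁ i)) ⟨i, hid⟩
    rw [h3, ← h1]
  have Iβ := side_identity Bw w₁ u₁ β bb B hBw hβ (fun j hj => (hbbspec j hj).1) hBud hbbd
    hlowB hhighB hdiagB
  -- the normalizations
  have hu0ne : u₁ 0 ≠ 0 := (hu 0 (by omega)).2
  have hα0 : α 0 = 1 := by
    have h1 := hα 0 (by omega)
    rw [Finset.sum_range_one] at h1
    norm_num at h1
    rw [← hc₁] at h1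
    have h2 : (α 0 - 1) • u₁ 0 = 0 := by
      rw [sub_smul, one_smul, ← h1, sub_self]
    rcases smul_eq_zero.1 h2 with h3 | h3
    · have := sub_eq_zero.1 h3
      exact this
    · exact absurd h3 hu0ne
  have hβ0 : β 0 = 1 := by
    have h1 := hβ 0 (by omega)
    rw [Finset.sum_range_one] at h1
    norm_num at h1
    rw [← hc₁] at h1
    have h2 : (β 0 - 1) • u₁ 0 = 0 := by
      rw [sub_smul, one_smul]
      nth_rewrite 2 [h1]
      rw [sub_self]
    rcases smul_eq_zero.1 h2 with h3 | h3
    · exact sub_eq_zero.1 h3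
    · exact absurd h3 hu0ne
  have hrne : ∀ j, j < d → r j ≠ 0 := fun j hj => (hrspec j hj).2
  have hbbne : ∀ j, j < d → bb j ≠ 0 := fun j hj => (hbbspec j hj).2
  have hα1 : α 1 = 0 :=
    scalar_one α r (fun a b => coordFn Bu (A (u₁ a)) b) (by omega) hα0 hrne hrd Iα
  -- β 2 = -1
  have hcoordw : ∀ j ≤ d, coordFn Bu (w₁ j) 0 = α j := by
    intro j hj
    rw [hα j hj, coordFn_sum_expansion Bu u₁ hBu _ hj 0, if_pos (by omega)]
    norm_num
  have hβ2 : β 2 = -1 := by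
    have h2 := hβ 2 (by omega)
    rw [Finset.sum_range_succ, Finset.sum_range_succ, Finset.sum_range_one] at h2
    norm_num at h2
    have h5 := congrArg (fun v => coordFn Bu v 0) h2
    simp only [coordFn_add, coordFn_smul] at h5
    rw [hcoordw 0 (by omega), hcoordw 1 (by omega), hcoordw 2 (by omega), hα0, hα1, hnα] at h5
    have hL : coordFn Bu (u₁ 2) 0 = 0 := by
      have h3 : coordFn Bu (u₁ 2) 0 = Bu.repr (u₁ 2) ⟨0, by omega⟩ :=
        coordFn_fin Bu (u₁ 2) ⟨0, by omega⟩
      have h4 : u₁ 2 = Bu ⟨2, by omega⟩ := (hBu ⟨2, by omega⟩).symm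
      rw [h3, h4, Bu.repr_self, Finsupp.single_apply, if_neg (by simp [Fin.ext_iff])]
    rw [hL] at h5
    rw [hβ0] at h5
    -- h5 : 0 = β 2 * 1 + β 1 * 0 + 1 * 1
    linear_combination -h5
  have hβ2ne : β 2 ≠ 0 := by rw [hβ2]; norm_num
  have hα2ne : α 2 ≠ 0 := by rw [hnα]; exact one_ne_zero
  -- conclusion
  intro i hi1 hi2
  have h2i : 2 * i + 2 ≤ d := by omega
  constructor
  · exact scalar_main α r (fun a b => coordFn Bu (A (u₁ a)) b) hd hα0 hα2ne hrne hrd Iα hi1 h2i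
  · exact scalar_main β bb (fun a b => coordFn Bw (B (w₁ a)) b) hd hβ0 hβ2ne hbbne hbbd Iβ hi1 h2i
end

section
/- Let (A,B,C) be a bipartite LR triple on V of diameter d ≥ 2, with parameter sequences {φ_i}, {φ'_i}, {φ''_i} of the LR pairs (A,B), (B,C), (C,A). Then for 2 ≤ i ≤ d−1 one has φ_{i−1} ≠ φ_{i+1}, φ'_{i−1} ≠ φ'_{i+1}, and φ''_{i−1} ≠ φ''_{i+1}. -/
variable {F : Type*} [Field F] {V : Type*} [AddCommGroup V] [Module F V]

section AuxLemmas

variable {F : Type*} [Field F] {V : Type*} [AddCommGroup V] [Module F V]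
  [FiniteDimensional F V] {d : ℕ}

lemma span_of_dim_one {p : Submodule F V} (h1 : Module.finrank F p = 1) {w : V}
    (hw : w ∈ p) (hw0 : w ≠ 0) : p = Submodule.span F {w} := by
  apply (Submodule.eq_of_le_of_finrank_eq (Submodule.span_le.2 (by simpa using hw)) ?_).symm
  rw [h1, finrank_span_singleton hw0]

lemma image_ne_zero {X : Module.End F V} {p q : Submodule F V}
    (hmap : Submodule.map X p = q) (h1 : Module.finrank F p = 1)
    (h2 : Module.finrank F q = 1) {w : V} (hw : w ∈ p) (hw0 : w ≠ 0) : X w ≠ 0 := by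
  intro h0
  rw [span_of_dim_one h1 hw hw0, Submodule.map_span, Set.image_singleton] at hmap
  have hq : q = ⊥ := by rw [← hmap, h0]; exact Submodule.span_zero_singleton F
  rw [hq] at h2
  simp at h2

lemma exists_lrbasis (D : LRDecomp F V d) {A B : Module.End F V}
    (h : IsLRPairWith A B D) {φ : ℕ → F} (hφ : IsParamSeq A B D φ) :
    ∃ v : ℕ → V, (∀ k ≤ d, v k ∈ D.sub k ∧ v k ≠ 0) ∧
      (∀ k, 1 ≤ k → k ≤ d → A (v k) = v (k - 1)) ∧
      (A (v 0) = 0) ∧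
      (∀ k ≤ d, B (v k) = φ (k + 1) • v (k + 1)) ∧
      (∀ k, 1 ≤ k → k ≤ d → φ k ≠ 0) := by
  obtain ⟨vtop, htop_mem, htop0⟩ : ∃ w, w ∈ D.sub d ∧ w ≠ 0 := by
    have h1 := D.finrank_eq_one d le_rfl
    by_contra hcon
    push_neg at hcon
    have : D.sub d = ⊥ := by
      rw [Submodule.eq_bot_iff]
      intro x hx
      by_contra hx0
      exact hx0 (hcon x hx)
    rw [this] at h1; simp at h1
  set v : ℕ → V := fun k => (A ^ (d - k)) vtop with hv
  have hmem : ∀ m ≤ d, v (d - m) ∈ D.sub (d - m) ∧ v (d - m) ≠ 0 := by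
    intro m hm
    induction m with
    | zero => simpa [hv] using ⟨htop_mem, htop0⟩
    | succ n ih =>
      have hn : n ≤ d := by omega
      obtain ⟨ihm, ih0⟩ := ih hn
      have hstep : v (d - (n+1)) = A (v (d - n)) := by
        simp only [hv]
        rw [show d - (n+1) = (d - n - 1) from by omega]
        rw [show d - (d - n - 1) = (d - (d-n)) + 1 from by omega]
        rw [pow_succ']
        rfl
      have hlow := h.1.2 (d - (n+1)) (by omega)
      rw [show d - (n+1) + 1 = d - n from by omega] at hlow
      constructor
      · rw [hstep, ← hlow]
        exact Submodule.mem_map_of_mem ihm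
      · rw [hstep]
        exact image_ne_zero hlow (D.finrank_eq_one _ (by omega))
          (D.finrank_eq_one _ (by omega)) ihm ih0
  have hmem' : ∀ k ≤ d, v k ∈ D.sub k ∧ v k ≠ 0 := by
    intro k hk
    have := hmem (d - k) (by omega)
    rwa [show d - (d - k) = k from by omega] at this
  have hAv : ∀ k, 1 ≤ k → k ≤ d → A (v k) = v (k - 1) := by
    intro k h1 h2
    simp only [hv]
    rw [show d - (k-1) = (d - k) + 1 from by omega, pow_succ']
    rfl
  have hA0 : A (v 0) = 0 := by
    have h0 := h.1.1
    have := Submodule.mem_map_of_mem (f := A) (hmem' 0 (by omega)).1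
    rw [h0] at this
    simpa using this
  have hBv : ∀ k ≤ d, B (v k) = φ (k + 1) • v (k + 1) := by
    intro k hk
    rcases Nat.lt_or_ge k d with hlt | hge
    · have := hφ.2.2 (k+1) (by omega) (by omega) (v (k+1)) (hmem' (k+1) (by omega)).1
      rw [hAv (k+1) (by omega) (by omega)] at this
      simpa using this
    · have hkd : k = d := by omega
      have : B (v k) ∈ Submodule.map B (D.sub k) := Submodule.mem_map_of_mem (hmem' k hk).1
      rw [h.2 k hk, hkd, D.eq_bot_of_gt (d+1) (by omega)] at this
      simp only [Submodule.mem_bot] at this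
      rw [hkd, this, hφ.2.1, zero_smul]
  have hφ0 : ∀ k, 1 ≤ k → k ≤ d → φ k ≠ 0 := by
    intro k h1 h2 hzero
    have heq := hφ.2.2 k h1 h2 (v k) (hmem' k h2).1
    rw [hAv k h1 h2, hzero, zero_smul] at heq
    have hBne : B (v (k-1)) ≠ 0 := by
      have hmap := h.2 (k-1) (by omega)
      rw [show k - 1 + 1 = k from by omega] at hmap
      exact image_ne_zero hmap (D.finrank_eq_one _ (by omega)) (D.finrank_eq_one _ h2)
        (hmem' (k-1) (by omega)).1 (hmem' (k-1) (by omega)).2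
    exact hBne heq
  exact ⟨v, hmem', hAv, hA0, hBv, hφ0⟩

end AuxLemmas

section CoordLemmas

variable {F : Type*} [Field F] {V : Type*} [AddCommGroup V] [Module F V]
  [FiniteDimensional F V] {d : ℕ}

lemma exists_coord (D : LRDecomp F V d) {v : ℕ → V}
    (hv : ∀ k ≤ d, v k ∈ D.sub k ∧ v k ≠ 0) :
    ∃ co : ℕ → (V →ₗ[F] F),
      (∀ x : V, x = ∑ k ∈ Finset.range (d + 1), co k x • v k) ∧
      (∀ k ≤ d, ∀ m ≤ d, co m (v k) = if k = m then 1 else 0) ∧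
      (∀ m, d < m → co m = 0) := by
  have hmem : ∀ i : Fin (d + 1), v i.val ∈ D.sub i.val :=
    fun i => (hv i.val (Nat.lt_succ_iff.mp i.isLt)).1
  have hne : ∀ i : Fin (d + 1), v i.val ≠ 0 :=
    fun i => (hv i.val (Nat.lt_succ_iff.mp i.isLt)).2
  have hind : LinearIndependent F (fun i : Fin (d + 1) => v i.val) :=
    (D.isInternal.submodule_iSupIndep).linearIndependent _ hmem hne
  have hspan : ⊤ ≤ Submodule.span F (Set.range (fun i : Fin (d + 1) => v i.val)) := by
    rw [← D.isInternal.submodule_iSup_eq_top]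
    apply iSup_le
    intro i
    rw [span_of_dim_one (D.finrank_eq_one i.val (Nat.lt_succ_iff.mp i.isLt)) (hmem i) (hne i)]
    exact Submodule.span_mono (Set.singleton_subset_iff.2 (Set.mem_range_self i))
  set b : Module.Basis (Fin (d + 1)) F V := Module.Basis.mk hind hspan with hbdef
  have hb : ∀ i : Fin (d + 1), b i = v i.val := fun i => Module.Basis.mk_apply hind hspan i
  set co : ℕ → (V →ₗ[F] F) := fun m => if h : m ≤ d then
      (Finsupp.lapply (⟨m, by omega⟩ : Fin (d + 1))).comp b.repr.toLinearMap else 0 with hco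
  have hcoev : ∀ (m : ℕ) (hm : m ≤ d) (x : V), co m x = b.repr x ⟨m, by omega⟩ := by
    intro m hm x
    rw [hco]
    dsimp only
    rw [dif_pos hm]
    rfl
  refine ⟨co, ?_, ?_, ?_⟩
  · intro x
    rw [← Fin.sum_univ_eq_sum_range (fun k => co k x • v k) (d + 1)]
    have : ∀ i : Fin (d + 1), co i.val x • v i.val = b.repr x i • b i := by
      intro i
      rw [hcoev i.val (Nat.lt_succ_iff.mp i.isLt) x, hb i, Fin.eta]
    rw [Finset.sum_congr rfl (fun i _ => this i)]
    exact (b.sum_repr x).symm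
  · intro k hk m hm
    rw [hcoev m hm]
    have : v k = b ⟨k, by omega⟩ := (hb ⟨k, by omega⟩).symm
    rw [this, Module.Basis.repr_self, Finsupp.single_apply]
    simp [Fin.ext_iff]
  · intro m hm
    rw [hco]
    dsimp only
    rw [dif_neg (by omega)]

end CoordLemmas

section KeyLemma

variable {F : Type*} [Field F] {V : Type*} [AddCommGroup V] [Module F V]
  [FiniteDimensional F V] {d : ℕ}

lemma sum_eq_pair {s : Finset ℕ} {f : ℕ → F} {a b : ℕ} (ha : a ∈ s) (hb : b ∈ s)
    (hab : a ≠ b) (h : ∀ k ∈ s, k ≠ a → k ≠ b → f k = 0) :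
    ∑ k ∈ s, f k = f a + f b := by
  rw [← Finset.add_sum_erase s f ha]
  congr 1
  rw [Finset.sum_eq_single_of_mem b (Finset.mem_erase.2 ⟨hab.symm, hb⟩)]
  intro k hk hkb
  exact h k (Finset.mem_of_mem_erase hk) (Finset.ne_of_mem_erase hk) hkb

lemma key (hd : 2 ≤ d)
    (A B C : Module.End F V) (DAB DBC DCA : LRDecomp F V d)
    (hAB : IsLRPairWith A B DAB) (hBC : IsLRPairWith B C DBC) (hCA : IsLRPairWith C A DCA)
    (E : ℕ → Module.End F V) (hE : IsIdemSeq DAB E)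
    (hbipC : ∀ i ≤ d, LinearMap.trace F V (C * E i) = 0)
    (φ φ' φ'' : ℕ → F)
    (hφ : IsParamSeq A B DAB φ) (hφ' : IsParamSeq B C DBC φ') (hφ'' : IsParamSeq C A DCA φ'') :
    ∀ i, 2 ≤ i → i ≤ d - 1 → φ' (i - 1) ≠ φ' (i + 1) := by
  obtain ⟨v, hv, hAv, hA0, hBv, hφne⟩ := exists_lrbasis DAB hAB hφ
  obtain ⟨w, hw, hBw, hB0, hCw, hφ'ne⟩ := exists_lrbasis DBC hBC hφ'
  obtain ⟨u, hu, hCu, hC0, hAu, hφ''ne⟩ := exists_lrbasis DCA hCA hφ''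
  obtain ⟨co, hrepr, hcov, hcohigh⟩ := exists_coord DAB hv
  -- uniqueness of coordinates
  have huniq : ∀ (e : ℕ → F) (m : ℕ), m ≤ d →
      co m (∑ k ∈ Finset.range (d + 1), e k • v k) = e m := by
    intro e m hm
    rw [map_sum]
    simp only [map_smul, smul_eq_mul]
    rw [Finset.sum_eq_single_of_mem m (Finset.mem_range.2 (by omega))]
    · rw [hcov m hm m hm, if_pos rfl, mul_one]
    · intro k hk hkm
      rw [hcov k (by simpa using Nat.lt_succ_iff.mp (Finset.mem_range.1 hk)) m hm,
        if_neg hkm, mul_zero]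
  have hzero : ∀ x : V, (∀ m ≤ d, co m x = 0) → x = 0 := by
    intro x hx
    rw [hrepr x]
    apply Finset.sum_eq_zero
    intro k hk
    rw [hx k (Nat.lt_succ_iff.mp (Finset.mem_range.1 hk)), zero_smul]
  -- coordinates of B-images
  have hBrep : ∀ x : V, B x = ∑ m ∈ Finset.range (d + 1),
      (if m = 0 then (0:F) else φ m * co (m - 1) x) • v m := by
    intro x
    conv_lhs => rw [hrepr x]
    rw [map_sum]
    have h1 : ∀ k ∈ Finset.range (d + 1), B (co k x • v k) = (φ (k+1) * co k x) • v (k+1) := by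
      intro k hk
      rw [map_smul, hBv k (Nat.lt_succ_iff.mp (Finset.mem_range.1 hk)), smul_smul, mul_comm]
    rw [Finset.sum_congr rfl h1, Finset.sum_range_succ, hφ.2.1, zero_mul, zero_smul, add_zero,
      Finset.sum_range_succ' (fun m => (if m = 0 then (0:F) else φ m * co (m - 1) x) • v m) d]
    rw [if_pos rfl, zero_smul, add_zero]
    refine Finset.sum_congr rfl (fun i _ => ?_)
    rw [if_neg (Nat.succ_ne_zero i), Nat.add_sub_cancel]
  have hcoB : ∀ x : V, ∀ m, 1 ≤ m → m ≤ d → co m (B x) = φ m * co (m - 1) x := by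
    intro x m h1 h2
    rw [hBrep x, huniq _ m h2, if_neg (by omega)]
  -- coordinates of A-images
  have hArep : ∀ x : V, A x = ∑ m ∈ Finset.range (d + 1),
      (if m = d then (0:F) else co (m + 1) x) • v m := by
    intro x
    conv_lhs => rw [hrepr x]
    rw [map_sum, Finset.sum_range_succ' (fun k => A (co k x • v k)) d, map_smul, hA0,
      smul_zero, add_zero, Finset.sum_range_succ]
    rw [if_pos rfl, zero_smul, add_zero]
    apply Finset.sum_congr rfl
    intro i hi
    have hid : i < d := Finset.mem_range.1 hi
    rw [map_smul, hAv (i+1) (by omega) (by omega), Nat.add_sub_cancel, if_neg (by omega)]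
  have hcoA : ∀ x : V, ∀ m, m ≤ d → m ≠ d → co m (A x) = co (m + 1) x := by
    intro x m h1 h2
    rw [hArep x, huniq _ m h1, if_neg h2]
  -- support of w in v-coordinates
  have hwsupp : ∀ j ≤ d, (∀ k ≤ d, k < d - j → co k (w j) = 0) ∧ co (d - j) (w j) ≠ 0 := by
    intro j
    induction j with
    | zero =>
      intro _
      have hz : ∀ k ≤ d, k < d - 0 → co k (w 0) = 0 := by
        intro k hk hkd
        have h1 : co (k+1) (B (w 0)) = φ (k+1) * co k (w 0) := by
          rw [hcoB (w 0) (k+1) (by omega) (by omega), Nat.add_sub_cancel]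
        rw [hB0, map_zero] at h1
        have := hφne (k+1) (by omega) (by omega)
        field_simp at h1
        exact (mul_eq_zero.mp h1.symm).resolve_left this
      refine ⟨hz, fun htop => ?_⟩
      apply (hw 0 (by omega)).2
      apply hzero
      intro m hm
      rcases Nat.lt_or_ge m d with h | h
      · exact hz m hm (by omega)
      · have hmd : m = d - 0 := by omega
        rw [hmd]; exact htop
    | succ n ih =>
      intro hn
      obtain ⟨ihz, ihtop⟩ := ih (by omega)
      have hBwn : B (w (n+1)) = w n := by
        have := hBw (n+1) (by omega) (by omega)
        rwa [Nat.add_sub_cancel] at this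
      have hrel : ∀ k ≤ d - 1, co k (w (n+1)) = (φ (k+1))⁻¹ * co (k+1) (w n) := by
        intro k hk
        have h1 : co (k+1) (B (w (n+1))) = φ (k+1) * co k (w (n+1)) := by
          rw [hcoB _ (k+1) (by omega) (by omega), Nat.add_sub_cancel]
        rw [hBwn] at h1
        have hne := hφne (k+1) (by omega) (by omega)
        field_simp [h1]
        rw [h1]; ring
      constructor
      · intro k hk hkd
        rw [hrel k (by omega)]
        rw [ihz (k+1) (by omega) (by omega), mul_zero]
      · rw [hrel (d - (n+1)) (by omega)]
        have : d - (n+1) + 1 = d - n := by omega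
        rw [this]
        exact mul_ne_zero (inv_ne_zero (hφne (d-n) (by omega) (by omega))) ihtop
  -- support of u in v-coordinates (downward induction)
  have husuppAux : ∀ t ≤ d, (∀ k ≤ d, d - (d - t) < k → co k (u (d - t)) = 0) ∧
      co (d - (d - t)) (u (d - t)) ≠ 0 := by
    intro t
    induction t with
    | zero =>
      intro _
      have hAud : A (u d) = 0 := by
        rw [hAu d le_rfl, hφ''.2.1, zero_smul]
      have hz : ∀ k ≤ d, d - (d - 0) < k → co k (u (d - 0)) = 0 := by
        intro k hk hkd
        have hk1 : 1 ≤ k := by omega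
        have h1 : co (k-1) (A (u d)) = co k (u d) := by
          rw [hcoA _ (k-1) (by omega) (by omega), show k - 1 + 1 = k from by omega]
        rw [hAud, map_zero] at h1
        rw [show d - 0 = d from by omega]
        exact h1.symm
      refine ⟨hz, fun htop => ?_⟩
      apply (hu (d - 0) (by omega)).2
      apply hzero
      intro m hm
      rcases Nat.eq_zero_or_pos m with h | h
      · rw [show m = d - (d - 0) from by omega]; exact htop
      · exact hz m hm (by omega)
    | succ n ih =>
      intro hn
      obtain ⟨ihz, ihtop⟩ := ih (by omega)
      set j := d - (n+1) with hj
      have hj1 : j + 1 = d - n := by omega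
      have hφ''j : φ'' (j+1) ≠ 0 := hφ''ne (j+1) (by omega) (by omega)
      have hArel : A (u j) = φ'' (j+1) • u (j+1) := hAu j (by omega)
      have hrel : ∀ k, 1 ≤ k → k ≤ d → co k (u j) = φ'' (j+1) * co (k-1) (u (j+1)) := by
        intro k h1 h2
        have hA1 : co (k-1) (A (u j)) = co k (u j) := by
          rw [hcoA _ (k-1) (by omega) (by omega), show k - 1 + 1 = k from by omega]
        rw [hArel, map_smul, smul_eq_mul] at hA1
        exact hA1.symm
      have hdj : d - j = n + 1 := by omega
      constructor
      · intro k hk hkd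
        rw [hdj] at hkd
        rw [hrel k (by omega) (by omega)]
        have h0 : co (k-1) (u (j+1)) = 0 := by
          rw [hj1]
          exact ihz (k-1) (by omega) (by omega)
        rw [h0, mul_zero]
      · rw [hdj, hrel (n+1) (by omega) (by omega), Nat.add_sub_cancel]
        apply mul_ne_zero hφ''j
        rw [hj1]
        rwa [show d - (d - n) = n from by omega] at ihtop
  have husupp : ∀ j ≤ d, (∀ k ≤ d, d - j < k → co k (u j) = 0) ∧
      co (d - j) (u j) ≠ 0 := by
    intro j hjd
    have := husuppAux (d - j) (by omega)
    rwa [show d - (d - j) = j from by omega] at this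
  -- v (d - t) lies in the span of w 0, ..., w t
  have hWspan : ∀ t, t ≤ d → v (d - t) ∈ Submodule.span F (w '' {m | m ≤ t}) := by
    intro t
    induction t using Nat.strong_induction_on with
    | _ t IH =>
    intro ht
    obtain ⟨hwz, hwtop⟩ := hwsupp t ht
    have hsplit : w t = (∑ k ∈ (Finset.range (d+1)).filter (fun k => d - t < k),
          co k (w t) • v k) + co (d - t) (w t) • v (d - t) := by
      conv_lhs => rw [hrepr (w t)]
      rw [← Finset.sum_filter_add_sum_filter_not (Finset.range (d+1)) (fun k => d - t < k)]
      congr 1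
      rw [Finset.sum_eq_single_of_mem (d - t)
        (by simp only [Finset.mem_filter, Finset.mem_range]; omega)]
      intro k hk hkne
      simp only [Finset.mem_filter, Finset.mem_range, not_lt] at hk
      rw [hwz k (by omega) (by omega), zero_smul]
    have hkey : co (d - t) (w t) • v (d - t) ∈ Submodule.span F (w '' {m | m ≤ t}) := by
      have : co (d - t) (w t) • v (d - t) = w t - ∑ k ∈ (Finset.range (d+1)).filter
          (fun k => d - t < k), co k (w t) • v k := by
        rw [eq_sub_iff_add_eq, add_comm]
        exact hsplit.symm
      rw [this]
      apply sub_mem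
      · exact Submodule.subset_span ⟨t, by simp, rfl⟩
      · apply Submodule.sum_mem
        intro k hk
        simp only [Finset.mem_filter, Finset.mem_range] at hk
        apply Submodule.smul_mem
        have hk2 : k = d - (d - k) := by omega
        rw [hk2]
        refine Submodule.span_mono (Set.image_mono ?_) (IH (d - k) (by omega) (by omega))
        intro m hm
        simp only [Set.mem_setOf_eq] at hm ⊢
        omega
    have := Submodule.smul_mem _ (co (d - t) (w t))⁻¹ hkey
    rwa [inv_smul_smul₀ hwtop] at this
  -- v t lies in the span of u (d-t), ..., u d
  have hUspan : ∀ t, t ≤ d → v t ∈ Submodule.span F (u '' {m | d - t ≤ m ∧ m ≤ d}) := by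
    intro t
    induction t using Nat.strong_induction_on with
    | _ t IH =>
    intro ht
    obtain ⟨huz, hutop⟩ := husupp (d - t) (by omega)
    rw [show d - (d - t) = t from by omega] at huz hutop
    have hsplit : u (d - t) = (∑ k ∈ (Finset.range (d+1)).filter (fun k => k < t),
          co k (u (d - t)) • v k) + co t (u (d - t)) • v t := by
      conv_lhs => rw [hrepr (u (d - t))]
      rw [← Finset.sum_filter_add_sum_filter_not (Finset.range (d+1)) (fun k => k < t)]
      congr 1
      rw [Finset.sum_eq_single_of_mem t
        (by simp only [Finset.mem_filter, Finset.mem_range]; omega)]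
      intro k hk hkne
      simp only [Finset.mem_filter, Finset.mem_range, not_lt] at hk
      rw [huz k (by omega) (by omega), zero_smul]
    have hkey : co t (u (d - t)) • v t ∈
        Submodule.span F (u '' {m | d - t ≤ m ∧ m ≤ d}) := by
      have : co t (u (d - t)) • v t = u (d - t) - ∑ k ∈ (Finset.range (d+1)).filter
          (fun k => k < t), co k (u (d - t)) • v k := by
        rw [eq_sub_iff_add_eq, add_comm]
        exact hsplit.symm
      rw [this]
      apply sub_mem
      · exact Submodule.subset_span ⟨d - t, by simp only [Set.mem_setOf_eq]; omega, rfl⟩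
      · apply Submodule.sum_mem
        intro k hk
        simp only [Finset.mem_filter, Finset.mem_range] at hk
        apply Submodule.smul_mem
        refine Submodule.span_mono (Set.image_mono ?_) (IH k hk.2 (by omega))
        intro m hm
        simp only [Set.mem_setOf_eq] at hm ⊢
        omega
    have := Submodule.smul_mem _ (co t (u (d - t)))⁻¹ hkey
    rwa [inv_smul_smul₀ hutop] at this
  -- killing functional on spans
  have hkill : ∀ (m : ℕ) (S : Set V), (∀ x ∈ S, co m x = 0) →
      ∀ y ∈ Submodule.span F S, co m y = 0 := by
    intro m S hS y hy
    have hle : Submodule.span F S ≤ LinearMap.ker (co m) :=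
      Submodule.span_le.mpr (fun x hx => LinearMap.mem_ker.mpr (hS x hx))
    exact LinearMap.mem_ker.mp (hle hy)
  -- upper vanishing of the matrix of C
  have hM1 : ∀ k ≤ d, ∀ m ≤ d, m + 1 < k → co m (C (v k)) = 0 := by
    intro k hk m hm hmk
    have h1 : v k ∈ Submodule.span F (w '' {m' | m' ≤ d - k}) := by
      have := hWspan (d - k) (by omega)
      rwa [show d - (d - k) = k from by omega] at this
    have h2 : C (v k) ∈ Submodule.span F ((C ∘ w) '' {m' | m' ≤ d - k}) := by
      have := Submodule.mem_map_of_mem (f := (C : Module.End F V)) h1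
      rwa [Submodule.map_span, Set.image_image] at this
    refine hkill m _ ?_ _ h2
    rintro x ⟨m', hm', rfl⟩
    simp only [Set.mem_setOf_eq] at hm'
    simp only [Function.comp_apply]
    rw [hCw m' (by omega), map_smul, smul_eq_mul]
    rw [(hwsupp (m' + 1) (by omega)).1 m hm (by omega), mul_zero]
  -- lower vanishing of the matrix of C
  have hM2 : ∀ k ≤ d, ∀ m ≤ d, k + 1 < m → co m (C (v k)) = 0 := by
    intro k hk m hm hmk
    have h1 : v k ∈ Submodule.span F (u '' {m' | d - k ≤ m' ∧ m' ≤ d}) := hUspan k hk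
    have h2 : C (v k) ∈ Submodule.span F ((C ∘ u) '' {m' | d - k ≤ m' ∧ m' ≤ d}) := by
      have := Submodule.mem_map_of_mem (f := (C : Module.End F V)) h1
      rwa [Submodule.map_span, Set.image_image] at this
    refine hkill m _ ?_ _ h2
    rintro x ⟨m', hm', rfl⟩
    simp only [Set.mem_setOf_eq] at hm'
    simp only [Function.comp_apply]
    rcases Nat.eq_zero_or_pos m' with h0 | h0
    · rw [h0, hC0, map_zero]
    · rw [hCu m' (by omega) (by omega)]
      exact (husupp (m' - 1) (by omega)).1 m hm (by omega)
  -- diagonal vanishing, from the bipartite trace condition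
  have hM3 : ∀ k ≤ d, co k (C (v k)) = 0 := by
    intro k hk
    have hEk : ∀ x : V, E k x = co k x • v k := by
      intro x
      conv_lhs => rw [hrepr x]
      rw [map_sum]
      rw [Finset.sum_eq_single_of_mem k (Finset.mem_range.2 (by omega))]
      · rw [map_smul, (hE k).1 (v k) (hv k hk).1]
      · intro j hj hjk
        rw [map_smul, (hE k).2 j hjk (v j)
          (hv j (Nat.lt_succ_iff.mp (Finset.mem_range.1 hj))).1, smul_zero]
    have hCE : C * E k = dualTensorHom F V V (co k ⊗ₜ[F] C (v k)) := by
      ext x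
      show C (E k x) = _
      rw [dualTensorHom_apply, hEk x, map_smul]
    have := hbipC k hk
    rw [hCE, LinearMap.trace_eq_contract_apply, contractLeft_apply] at this
    exact this
  -- combined off-tridiagonal vanishing
  have hMoff : ∀ k m, k ≤ d → m ≤ d → m ≠ k + 1 → k ≠ m + 1 → co m (C (v k)) = 0 := by
    intro k m hk hm h1 h2
    rcases Nat.lt_trichotomy k m with h | h | h
    · exact hM2 k hk m hm (by omega)
    · rw [h]; exact hM3 m hm
    · exact hM1 k hk m hm (by omega)
  -- coordinates of C-images
  have hcoCsum : ∀ x : V, ∀ m ≤ d, co m (C x) =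
      ∑ k ∈ Finset.range (d + 1), co k x * co m (C (v k)) := by
    intro x m hm
    conv_lhs => rw [hrepr x]
    rw [map_sum, map_sum]
    exact Finset.sum_congr rfl (fun k _ => by rw [map_smul, map_smul, smul_eq_mul])
  have hcoC2 : ∀ x : V, ∀ m, 1 ≤ m → m ≤ d - 1 → co m (C x) =
      co (m+1) x * co m (C (v (m+1))) + co (m-1) x * co m (C (v (m-1))) := by
    intro x m h1 h2
    rw [hcoCsum x m (by omega)]
    apply sum_eq_pair (Finset.mem_range.2 (by omega)) (Finset.mem_range.2 (by omega))
      (by omega)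
    intro k hk hk1 hk2
    have hkd : k ≤ d := Nat.lt_succ_iff.mp (Finset.mem_range.1 hk)
    have e1 : m ≠ k + 1 := by omega
    have e2 : k ≠ m + 1 := by omega
    rw [hMoff k m hkd (by omega) e1 e2, mul_zero]
  have hcoC0 : ∀ x : V, co 0 (C x) = co 1 x * co 0 (C (v 1)) := by
    intro x
    rw [hcoCsum x 0 (by omega)]
    rw [Finset.sum_eq_single_of_mem 1 (Finset.mem_range.2 (by omega))]
    intro k hk hk1
    have hkd : k ≤ d := Nat.lt_succ_iff.mp (Finset.mem_range.1 hk)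
    have e1 : (0:ℕ) ≠ k + 1 := by omega
    have e2 : k ≠ 0 + 1 := by omega
    rw [hMoff k 0 hkd (by omega) e1 e2, mul_zero]
  have hcoCd : ∀ x : V, co d (C x) = co (d-1) x * co d (C (v (d-1))) := by
    intro x
    rw [hcoCsum x d (by omega)]
    rw [Finset.sum_eq_single_of_mem (d-1) (Finset.mem_range.2 (by omega))]
    intro k hk hk1
    have hkd : k ≤ d := Nat.lt_succ_iff.mp (Finset.mem_range.1 hk)
    have e1 : d ≠ k + 1 := by omega
    have e2 : k ≠ d + 1 := by omega
    rw [hMoff k d hkd le_rfl e1 e2, mul_zero]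
  -- the relation φ' j = φ (d-j+1) * M (d-j+1) (d-j)
  have hA' : ∀ j, 1 ≤ j → j ≤ d → φ' j = φ (d-j+1) * co (d-j) (C (v (d-j+1))) := by
    intro j h1 h2
    have hCwj : C (w (j-1)) = φ' j • w j := by
      have := hCw (j-1) (by omega)
      rwa [show j - 1 + 1 = j from by omega] at this
    have hBwj : B (w j) = w (j-1) := hBw j h1 h2
    have heq0 : co (d-j) (C (w (j-1))) = φ' j * co (d-j) (w j) := by
      rw [hCwj, map_smul, smul_eq_mul]
    have htau : co (d-j) (w j) ≠ 0 := (hwsupp j h2).2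
    rcases Nat.lt_or_ge j d with hjd | hjd
    · set k := d - j with hkdef
      have hk1 : 1 ≤ k := by omega
      have hk2 : k ≤ d - 1 := by omega
      have hLHS := hcoC2 (w (j-1)) k hk1 hk2
      have hz : co (k-1) (w (j-1)) = 0 :=
        (hwsupp (j-1) (by omega)).1 (k-1) (by omega) (by omega)
      have htb : co (k+1) (w (j-1)) = φ (k+1) * co k (w j) := by
        rw [← hBwj, hcoB _ (k+1) (by omega) (by omega), Nat.add_sub_cancel]
      rw [heq0, htb, hz, zero_mul, add_zero] at hLHS
      have : (φ' j) * co k (w j) = (φ (k+1) * co k (C (v (k+1)))) * co k (w j) := by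
        rw [hLHS]; ring
      have hcanc := mul_right_cancel₀ htau this
      rw [hcanc]
    · rw [show d - j + 1 = 1 from by omega, show d - j = 0 from by omega]
      rw [show d - j = 0 from by omega] at heq0 htau
      have hLHS := hcoC0 (w (j-1))
      have htb : co 1 (w (j-1)) = φ 1 * co 0 (w j) := by
        rw [← hBwj, hcoB _ 1 (by omega) (by omega)]
      rw [heq0, htb] at hLHS
      have : (φ' j) * co 0 (w j) = (φ 1 * co 0 (C (v 1))) * co 0 (w j) := by
        rw [hLHS]; ring
      exact mul_right_cancel₀ htau this
  -- nonvanishing of the superdiagonal entries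
  have hy : ∀ j, 1 ≤ j → j ≤ d → co (d-j+1) (C (v (d-j))) ≠ 0 := by
    intro j h1 h2
    have hCuj : C (u j) = u (j-1) := hCu j h1 h2
    have heq0 : co (d-j+1) (C (u j)) = co (d-j+1) (u (j-1)) := by rw [hCuj]
    have hRHS : co (d-j+1) (u (j-1)) ≠ 0 := by
      have := (husupp (j-1) (by omega)).2
      rwa [show d - (j-1) = d - j + 1 from by omega] at this
    rcases Nat.lt_or_ge 1 j with hj2 | hj2
    · set k := d - j + 1 with hkdef
      have hk1 : 1 ≤ k := by omega
      have hk2 : k ≤ d - 1 := by omega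
      have hLHS := hcoC2 (u j) k hk1 hk2
      have hz : co (k+1) (u j) = 0 := (husupp j h2).1 (k+1) (by omega) (by omega)
      have htopu : co (k-1) (u j) ≠ 0 := by
        have := (husupp j h2).2
        rwa [show d - j = k - 1 from by omega] at this
      rw [heq0, hz, zero_mul, zero_add] at hLHS
      intro hM0
      rw [show d - j = k - 1 from by omega] at hM0
      rw [hM0, mul_zero] at hLHS
      exact hRHS hLHS
    · have hj1 : j = 1 := by omega
      rw [hj1] at heq0 hRHS ⊢
      rw [show d - 1 + 1 = d from by omega] at heq0 hRHS ⊢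
      have hLHS := hcoCd (u 1)
      rw [heq0] at hLHS
      intro hM0
      rw [hM0, mul_zero] at hLHS
      exact hRHS hLHS
  -- the final inequality
  intro i hi1 hi2 hcontra
  set n := d - i with hndef
  have hn1 : 1 ≤ n := by omega
  have hn2 : n ≤ d - 2 := by omega
  set k := n + 1 with hkdef
  have hCwi : C (w i) = φ' (i+1) • w (i+1) := hCw i (by omega)
  have heq0 : co k (C (w i)) = φ' (i+1) * co k (w (i+1)) := by
    rw [hCwi, map_smul, smul_eq_mul]
  have hLHS := hcoC2 (w i) k (by omega) (by omega)
  have hBwi1 : B (w (i+1)) = w i := by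
    have := hBw (i+1) (by omega) (by omega)
    rwa [Nat.add_sub_cancel] at this
  have ht1 : co (k+1) (w i) = φ (k+1) * co k (w (i+1)) := by
    rw [← hBwi1, hcoB _ (k+1) (by omega) (by omega), Nat.add_sub_cancel]
  have ht2 : co (k-1) (w i) = φ (k-1) * co (k-2) (w (i+1)) := by
    rw [← hBwi1, hcoB _ (k-1) (by omega) (by omega), show k-1-1 = k-2 from by omega]
  have htau : co (k-2) (w (i+1)) ≠ 0 := by
    have := (hwsupp (i+1) (by omega)).2
    rwa [show d - (i+1) = k - 2 from by omega] at this
  -- identify φ' (i-1) and φ' (i+1)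
  have hid1 : φ' (i+1) = φ (k-1) * co (k-2) (C (v (k-1))) := by
    have := hA' (i+1) (by omega) (by omega)
    rwa [show d - (i+1) + 1 = k - 1 from by omega,
      show d - (i+1) = k - 2 from by omega] at this
  have hid2 : φ' (i-1) = φ (k+1) * co k (C (v (k+1))) := by
    have := hA' (i-1) (by omega) (by omega)
    rwa [show d - (i-1) + 1 = k + 1 from by omega,
      show d - (i-1) = k from by omega] at this
  have hyne : co k (C (v (k-1))) ≠ 0 := by
    have := hy i (by omega) (by omega)
    rwa [show d - i + 1 = k from by omega, show d - i = k - 1 from by omega] at this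
  rw [heq0, ht1, ht2] at hLHS
  rw [← hcontra, hid2] at hLHS
  have hfinal : φ (k-1) * co (k-2) (w (i+1)) * co k (C (v (k-1))) = 0 := by
    linear_combination -hLHS
  rcases mul_eq_zero.mp hfinal with h | h
  · rcases mul_eq_zero.mp h with h' | h'
    · exact hφne (k-1) (by omega) (by omega) h'
    · exact htau h'
  · exact hyne h

end KeyLemma

theorem stmt13
    {F : Type*} [Field F] {V : Type*} [AddCommGroup V] [Module F V]
    [FiniteDimensional F V] {d : ℕ} (hdim : Module.finrank F V = d + 1)
    (A B C : Module.End F V) (DAB DBC DCA : LRDecomp F V d)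
    (hAB : IsLRPairWith A B DAB) (hBC : IsLRPairWith B C DBC) (hCA : IsLRPairWith C A DCA)
    (hd : 2 ≤ d)
    (E E' E'' : ℕ → Module.End F V)
    (hE : IsIdemSeq DAB E) (hE' : IsIdemSeq DBC E') (hE'' : IsIdemSeq DCA E'')
    (hbip : IsBipartite d A B C E E' E'')
    (φ φ' φ'' : ℕ → F)
    (hφ : IsParamSeq A B DAB φ) (hφ' : IsParamSeq B C DBC φ') (hφ'' : IsParamSeq C A DCA φ'') :
    ∀ i, 2 ≤ i → i ≤ d - 1 →
      φ (i - 1) ≠ φ (i + 1) ∧ φ' (i - 1) ≠ φ' (i + 1) ∧ φ'' (i - 1) ≠ φ'' (i + 1) := by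
  intro i h1 h2
  refine ⟨?_, ?_, ?_⟩
  · exact key hd C A B DCA DAB DBC hCA hAB hBC E'' hE'' (fun j hj => (hbip j hj).2.2)
      φ'' φ φ' hφ'' hφ hφ' i h1 h2
  · exact key hd A B C DAB DBC DCA hAB hBC hCA E hE (fun j hj => (hbip j hj).1)
      φ φ' φ'' hφ hφ' hφ'' i h1 h2
  · exact key hd B C A DBC DCA DAB hBC hCA hAB E' hE' (fun j hj => (hbip j hj).2.1)
      φ' φ'' φ hφ' hφ'' hφ i h1 h2
end

section
/- Let (A,B,C) be a bipartite LR triple on V with J as defined, and let α_out, α_in, β_out, β_in, γ_out, γ_in be nonzero scalars in F. Set A' = α_out·AJ + α_in·A(I−J), B' = β_out·BJ + β_in·B(I−J), C' = γ_out·CJ + γ_in·C(I−J). Then A'B'C'J = α_out·β_in·γ_out·ABCJ and A'C'B'J = α_out·γ_in·β_out·ACBJ; in particular A'B'C'J is a nonzero scalar multiple of ABCJ and A'C'B'J is a nonzero scalar multiple of ACBJ. -/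
variable {F : Type*} [Field F] {V : Type*} [AddCommGroup V] [Module F V]

section LRAux

open Module

variable {F : Type*} [Field F] {V : Type*} [AddCommGroup V] [Module F V] {d : ℕ}

lemma LR.decomp_induction (D : LRDecomp F V d) {P : V → Prop}
    (h0 : P 0) (hadd : ∀ x y, P x → P y → P (x + y))
    (hmem : ∀ i ≤ d, ∀ v ∈ D.sub i, P v) (v : V) : P v := by
  classical
  have hv : v ∈ ⨆ i : Fin (d + 1), D.sub i.val := by
    rw [D.isInternal.submodule_iSup_eq_top]; trivial
  exact Submodule.iSup_induction (motive := P) (fun i : Fin (d + 1) => D.sub i.val) hv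
    (fun i x hx => hmem i.val (Nat.lt_succ_iff.mp i.isLt) x hx) h0 hadd

lemma LR.end_ext (D : LRDecomp F V d) {f g : Module.End F V}
    (h : ∀ i ≤ d, ∀ v ∈ D.sub i, f v = g v) : f = g := by
  ext v
  exact LR.decomp_induction D (P := fun w => f w = g w) (by simp)
    (fun x y hx hy => by simp only [map_add, hx, hy]) h v

lemma LR.idem_mem {D : LRDecomp F V d} {E : ℕ → Module.End F V}
    (hE : IsIdemSeq D E) (i : ℕ) (v : V) : E i v ∈ D.sub i := by
  refine LR.decomp_induction D (P := fun w => E i w ∈ D.sub i)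
    (by simp) (fun x y hx hy => by
      show E i (x + y) ∈ D.sub i
      rw [map_add]; exact add_mem hx hy)
    (fun j hj w hw => ?_) v
  show E i w ∈ D.sub i
  by_cases hji : j = i
  · subst hji; rw [(hE j).1 w hw]; exact hw
  · rw [(hE i).2 j hji w hw]; exact Submodule.zero_mem _

lemma LR.idem_sum {D : LRDecomp F V d} {E : ℕ → Module.End F V}
    (hE : IsIdemSeq D E) (v : V) : ∑ i ∈ Finset.range (d + 1), E i v = v := by
  refine LR.decomp_induction D (P := fun w => ∑ i ∈ Finset.range (d + 1), E i w = w)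
    (by simp) (fun x y hx hy => by
      show ∑ i ∈ Finset.range (d + 1), E i (x + y) = x + y
      simp only [map_add, Finset.sum_add_distrib]
      rw [hx, hy]) (fun j hj w hw => ?_) v
  show ∑ i ∈ Finset.range (d + 1), E i w = w
  rw [Finset.sum_eq_single_of_mem j (Finset.mem_range.mpr (by omega))
    (fun i _ hij => (hE i).2 j (Ne.symm hij) w hw)]
  exact (hE j).1 w hw

lemma LR.pick_term {D : LRDecomp F V d} {E : ℕ → Module.End F V}
    (hE : IsIdemSeq D E) {s : Finset ℕ} {x : ℕ → V} {k t : ℕ} (hk : k ∈ s)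
    (hxk : x k ∈ D.sub t)
    (hother : ∀ m ∈ s, m ≠ k → E t (x m) = 0)
    (hs : ∑ m ∈ s, x m = 0) : x k = 0 := by
  have h := congrArg (E t) hs
  rw [map_sum, map_zero, Finset.sum_eq_single_of_mem k hk hother] at h
  rwa [(hE t).1 _ hxk] at h

lemma LR.inj_aux [FiniteDimensional F V] {X : Module.End F V} {p q : Submodule F V}
    (hmap : Submodule.map X p = q) (hp : finrank F p = 1) (hq : finrank F q = 1)
    {v : V} (hv : v ∈ p) (hXv : X v = 0) : v = 0 := by
  by_contra hne
  have hsp : Submodule.span F {v} = p :=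
    Submodule.eq_of_le_of_finrank_eq ((Submodule.span_singleton_le_iff_mem _ _).2 hv)
      (by rw [finrank_span_singleton hne, hp])
  have hbot : q = ⊥ := by
    rw [← hmap, ← hsp, Submodule.map_span, Set.image_singleton, hXv,
      Submodule.span_zero_singleton]
  rw [hbot] at hq
  simp at hq

lemma LR.mem_one_dim [FiniteDimensional F V] {p : Submodule F V} (hp : finrank F p = 1)
    {u : V} (hu : u ∈ p) (hune : u ≠ 0) {w : V} (hw : w ∈ p) : ∃ t : F, w = t • u := by
  have hsp : Submodule.span F {u} = p :=
    Submodule.eq_of_le_of_finrank_eq ((Submodule.span_singleton_le_iff_mem _ _).2 hu)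
      (by rw [finrank_span_singleton hune, hp])
  rw [← hsp] at hw
  obtain ⟨t, ht⟩ := Submodule.mem_span_singleton.mp hw
  exact ⟨t, ht.symm⟩

lemma LR.lowers_map {X : Module.End F V} {D : LRDecomp F V d} (hL : Lowers X D)
    {i : ℕ} (h1 : 1 ≤ i) (hid : i ≤ d) :
    Submodule.map X (D.sub i) = D.sub (i - 1) := by
  obtain ⟨j, rfl⟩ : ∃ j, i = j + 1 := ⟨i - 1, by omega⟩
  simpa using hL.2 j (by omega)

lemma LR.lowers_mem {X : Module.End F V} {D : LRDecomp F V d} (hL : Lowers X D)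
    {i : ℕ} (h1 : 1 ≤ i) (hid : i ≤ d) {v : V} (hv : v ∈ D.sub i) :
    X v ∈ D.sub (i - 1) := by
  rw [← LR.lowers_map hL h1 hid]
  exact Submodule.mem_map_of_mem hv

lemma LR.lowers_zero {X : Module.End F V} {D : LRDecomp F V d} (hL : Lowers X D)
    {v : V} (hv : v ∈ D.sub 0) : X v = 0 := by
  have hm : X v ∈ Submodule.map X (D.sub 0) := Submodule.mem_map_of_mem hv
  rw [hL.1] at hm
  simpa using hm

lemma LR.raises_mem {X : Module.End F V} {D : LRDecomp F V d} (hR : Raises X D)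
    {i : ℕ} (hid : i ≤ d) {v : V} (hv : v ∈ D.sub i) : X v ∈ D.sub (i + 1) := by
  rw [← hR i hid]
  exact Submodule.mem_map_of_mem hv

lemma LR.raises_zero {X : Module.End F V} {D : LRDecomp F V d} (hR : Raises X D)
    {v : V} (hv : v ∈ D.sub d) : X v = 0 := by
  have hm : X v ∈ D.sub (d + 1) := LR.raises_mem hR le_rfl hv
  rw [D.eq_bot_of_gt (d + 1) (by omega)] at hm
  simpa using hm

lemma LR.lowers_inj [FiniteDimensional F V] {X : Module.End F V} {D : LRDecomp F V d}
    (hL : Lowers X D) {i : ℕ} (h1 : 1 ≤ i) (hid : i ≤ d) {v : V} (hv : v ∈ D.sub i)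
    (h0 : X v = 0) : v = 0 :=
  LR.inj_aux (LR.lowers_map hL h1 hid) (D.finrank_eq_one i hid)
    (D.finrank_eq_one (i - 1) (by omega)) hv h0

lemma LR.raises_inj [FiniteDimensional F V] {X : Module.End F V} {D : LRDecomp F V d}
    (hR : Raises X D) {i : ℕ} (hid : i + 1 ≤ d) {v : V} (hv : v ∈ D.sub i)
    (h0 : X v = 0) : v = 0 :=
  LR.inj_aux (hR i (by omega)) (D.finrank_eq_one i (by omega))
    (D.finrank_eq_one (i + 1) hid) hv h0

lemma LR.pow_succ_apply (X : Module.End F V) (n : ℕ) (v : V) :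
    (X ^ (n + 1)) v = (X ^ n) (X v) := by
  rw [pow_succ]; rfl

lemma LR.lowers_pow [FiniteDimensional F V] {X : Module.End F V} {D : LRDecomp F V d}
    (hL : Lowers X D) :
    ∀ m i : ℕ, m ≤ i → i ≤ d → ∀ v ∈ D.sub i,
      (X ^ m) v ∈ D.sub (i - m) ∧ ((X ^ m) v = 0 → v = 0) := by
  intro m
  induction m with
  | zero =>
    intro i _ _ v hv
    refine ⟨by simpa using hv, fun h => by simpa using h⟩
  | succ n ih =>
    intro i hmi hid v hv
    have h1 : 1 ≤ i := by omega
    have hx : X v ∈ D.sub (i - 1) := LR.lowers_mem hL h1 hid hv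
    have key := ih (i - 1) (by omega) (by omega) (X v) hx
    constructor
    · rw [LR.pow_succ_apply]
      have hidx : i - 1 - n = i - (n + 1) := by omega
      rw [← hidx]
      exact key.1
    · intro h0
      rw [LR.pow_succ_apply] at h0
      exact LR.lowers_inj hL h1 hid hv (key.2 h0)

lemma LR.lowers_pow_zero {X : Module.End F V} {D : LRDecomp F V d} (hL : Lowers X D) :
    ∀ m i : ℕ, i ≤ d → i < m → ∀ v ∈ D.sub i, (X ^ m) v = 0 := by
  intro m
  induction m with
  | zero => intro i _ h; omega
  | succ n ih =>
    intro i hid him v hv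
    rcases Nat.eq_zero_or_pos i with h0 | h1
    · subst h0
      rw [LR.pow_succ_apply, LR.lowers_zero hL hv, map_zero]
    · rw [LR.pow_succ_apply]
      exact ih (i - 1) (by omega) (by omega) _ (LR.lowers_mem hL h1 hid hv)

lemma LR.raises_pow [FiniteDimensional F V] {X : Module.End F V} {D : LRDecomp F V d}
    (hR : Raises X D) :
    ∀ m i : ℕ, i + m ≤ d → ∀ v ∈ D.sub i,
      (X ^ m) v ∈ D.sub (i + m) ∧ ((X ^ m) v = 0 → v = 0) := by
  intro m
  induction m with
  | zero =>
    intro i _ v hv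
    refine ⟨by simpa using hv, fun h => by simpa using h⟩
  | succ n ih =>
    intro i hd v hv
    have hx : X v ∈ D.sub (i + 1) := LR.raises_mem hR (by omega) hv
    have key := ih (i + 1) (by omega) (X v) hx
    constructor
    · rw [LR.pow_succ_apply]
      have hidx : i + 1 + n = i + (n + 1) := by omega
      rw [← hidx]
      exact key.1
    · intro h0
      rw [LR.pow_succ_apply] at h0
      exact LR.raises_inj hR (by omega) hv (key.2 h0)

lemma LR.raises_pow_zero {X : Module.End F V} {D : LRDecomp F V d} (hR : Raises X D) :
    ∀ m i : ℕ, i ≤ d → d < i + m → ∀ v ∈ D.sub i, (X ^ m) v = 0 := by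
  intro m
  induction m with
  | zero => intro i h1 h2; omega
  | succ n ih =>
    intro i hid hbig v hv
    rcases Nat.lt_or_ge i d with h | h
    · rw [LR.pow_succ_apply]
      exact ih (i + 1) (by omega) (by omega) _ (LR.raises_mem hR hid hv)
    · have hieq : i = d := by omega
      subst hieq
      rw [LR.pow_succ_apply, LR.raises_zero hR hv, map_zero]

end LRAux

theorem stmt16
    {F : Type*} [Field F] {V : Type*} [AddCommGroup V] [Module F V]
    [FiniteDimensional F V] {d : ℕ} (hdim : Module.finrank F V = d + 1)
    (A B C : Module.End F V) (DAB DBC DCA : LRDecomp F V d)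
    (hAB : IsLRPairWith A B DAB) (hBC : IsLRPairWith B C DBC) (hCA : IsLRPairWith C A DCA)
    (E E' E'' : ℕ → Module.End F V)
    (hE : IsIdemSeq DAB E) (hE' : IsIdemSeq DBC E') (hE'' : IsIdemSeq DCA E'')
    (hbip : IsBipartite d A B C E E' E'')
    (J : Module.End F V) (hJ : J = ∑ j ∈ Finset.range (d / 2 + 1), E (2 * j))
    (aOut aIn bOut bIn cOut cIn : F)
    (haOut : aOut ≠ 0) (haIn : aIn ≠ 0) (hbOut : bOut ≠ 0) (hbIn : bIn ≠ 0)
    (hcOut : cOut ≠ 0) (hcIn : cIn ≠ 0)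
    (A' B' C' : Module.End F V)
    (hA' : A' = aOut • (A * J) + aIn • (A * (1 - J)))
    (hB' : B' = bOut • (B * J) + bIn • (B * (1 - J)))
    (hC' : C' = cOut • (C * J) + cIn • (C * (1 - J))) :
    A' * B' * C' * J = (aOut * bIn * cOut) • (A * B * C * J) ∧
    A' * C' * B' * J = (aOut * cIn * bOut) • (A * C * B * J) ∧
    (∃ e : F, e ≠ 0 ∧ A' * B' * C' * J = e • (A * B * C * J)) ∧
    (∃ e : F, e ≠ 0 ∧ A' * C' * B' * J = e • (A * C * B * J)) := by
    classical
  have hAlow : Lowers A DAB := hAB.1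
  have hBraise : Raises B DAB := hAB.2
  have hBlow : Lowers B DBC := hBC.1
  have hCraise : Raises C DBC := hBC.2
  have hClow : Lowers C DCA := hCA.1
  have hAraise : Raises A DCA := hCA.2
  -- G1 : components of C v more than one step above i vanish
  have G1 : ∀ i ≤ d, ∀ v ∈ DAB.sub i, ∀ j ≤ d, i + 2 ≤ j → E j (C v) = 0 := by
    intro i hi v hv j hj hij
    have step1 : ∀ k, k + i + 1 ≤ d → E'' k v = 0 := by
      intro k hk
      have hAv : (A ^ (i + 1)) v = 0 :=
        LR.lowers_pow_zero hAlow (i + 1) i hi (by omega) v hv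
      have hsum : ∑ m ∈ Finset.range (d + 1), (A ^ (i + 1)) (E'' m v) = 0 := by
        rw [← map_sum, LR.idem_sum hE'' v]; exact hAv
      have hmem : (A ^ (i + 1)) (E'' k v) ∈ DCA.sub (k + (i + 1)) :=
        (LR.raises_pow hAraise (i + 1) k (by omega) _ (LR.idem_mem hE'' k v)).1
      have hzero : (A ^ (i + 1)) (E'' k v) = 0 := by
        refine LR.pick_term hE'' (Finset.mem_range.mpr (by omega)) hmem ?_ hsum
        intro m hm hmk
        by_cases hms : m + (i + 1) ≤ d
        · exact (hE'' (k + (i + 1))).2 (m + (i + 1)) (by omega) _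
            ((LR.raises_pow hAraise (i + 1) m hms _ (LR.idem_mem hE'' m v)).1)
        · rw [LR.raises_pow_zero hAraise (i + 1) m
            (Nat.lt_succ_iff.mp (Finset.mem_range.mp hm)) (by omega) _
            (LR.idem_mem hE'' m v), map_zero]
      exact (LR.raises_pow hAraise (i + 1) k (by omega) _ (LR.idem_mem hE'' k v)).2 hzero
    have hsplit : E j (C v) = ∑ k ∈ Finset.range (d + 1), E j (C (E'' k v)) := by
      conv_lhs => rw [← LR.idem_sum hE'' v]
      rw [map_sum, map_sum]
    rw [hsplit]
    refine Finset.sum_eq_zero fun k hk => ?_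
    have hkd : k ≤ d := Nat.lt_succ_iff.mp (Finset.mem_range.mp hk)
    by_cases hks : k + i + 1 ≤ d
    · rw [step1 k hks, map_zero, map_zero]
    · have hk1 : 1 ≤ k := by omega
      have hCw : C (E'' k v) ∈ DCA.sub (k - 1) :=
        LR.lowers_mem hClow hk1 hkd (LR.idem_mem hE'' k v)
      have hz : (A ^ (i + 2)) (C (E'' k v)) = 0 :=
        LR.raises_pow_zero hAraise (i + 2) (k - 1) (by omega) (by omega) _ hCw
      have hsum2 : ∑ m ∈ Finset.range (d + 1), (A ^ (i + 2)) (E m (C (E'' k v))) = 0 := by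
        rw [← map_sum, LR.idem_sum hE]; exact hz
      have hterm : (A ^ (i + 2)) (E j (C (E'' k v))) = 0 := by
        refine LR.pick_term hE (Finset.mem_range.mpr (by omega))
          ((LR.lowers_pow hAlow (i + 2) j (by omega) hj _ (LR.idem_mem hE j _)).1)
          ?_ hsum2
        intro m hm hmj
        by_cases hms : i + 2 ≤ m
        · exact (hE (j - (i + 2))).2 (m - (i + 2)) (by omega) _
            ((LR.lowers_pow hAlow (i + 2) m hms
              (Nat.lt_succ_iff.mp (Finset.mem_range.mp hm)) _ (LR.idem_mem hE m _)).1)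
        · rw [LR.lowers_pow_zero hAlow (i + 2) m
            (Nat.lt_succ_iff.mp (Finset.mem_range.mp hm)) (by omega) _
            (LR.idem_mem hE m _), map_zero]
      exact (LR.lowers_pow hAlow (i + 2) j (by omega) hj _ (LR.idem_mem hE j _)).2 hterm
  -- G2 : components of C v more than one step below i vanish
  have G2 : ∀ i ≤ d, ∀ v ∈ DAB.sub i, ∀ j ≤ d, j + 2 ≤ i → E j (C v) = 0 := by
    intro i hi v hv j hj hij
    have step1 : ∀ k ≤ d, d - i + 1 ≤ k → E' k v = 0 := by
      intro k hkd hk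
      have hBv : (B ^ (d - i + 1)) v = 0 :=
        LR.raises_pow_zero hBraise (d - i + 1) i hi (by omega) v hv
      have hsum : ∑ m ∈ Finset.range (d + 1), (B ^ (d - i + 1)) (E' m v) = 0 := by
        rw [← map_sum, LR.idem_sum hE' v]; exact hBv
      have hzero : (B ^ (d - i + 1)) (E' k v) = 0 := by
        refine LR.pick_term hE' (Finset.mem_range.mpr (by omega))
          ((LR.lowers_pow hBlow (d - i + 1) k hk hkd _ (LR.idem_mem hE' k v)).1)
          ?_ hsum
        intro m hm hmk
        by_cases hms : d - i + 1 ≤ m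
        · exact (hE' (k - (d - i + 1))).2 (m - (d - i + 1)) (by omega) _
            ((LR.lowers_pow hBlow (d - i + 1) m hms
              (Nat.lt_succ_iff.mp (Finset.mem_range.mp hm)) _ (LR.idem_mem hE' m v)).1)
        · rw [LR.lowers_pow_zero hBlow (d - i + 1) m
            (Nat.lt_succ_iff.mp (Finset.mem_range.mp hm)) (by omega) _
            (LR.idem_mem hE' m v), map_zero]
      exact (LR.lowers_pow hBlow (d - i + 1) k hk hkd _ (LR.idem_mem hE' k v)).2 hzero
    have hsplit : E j (C v) = ∑ k ∈ Finset.range (d + 1), E j (C (E' k v)) := by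
      conv_lhs => rw [← LR.idem_sum hE' v]
      rw [map_sum, map_sum]
    rw [hsplit]
    refine Finset.sum_eq_zero fun k hk => ?_
    have hkd : k ≤ d := Nat.lt_succ_iff.mp (Finset.mem_range.mp hk)
    by_cases hks : d - i + 1 ≤ k
    · rw [step1 k hkd hks, map_zero, map_zero]
    · have hCw : C (E' k v) ∈ DBC.sub (k + 1) :=
        LR.raises_mem hCraise hkd (LR.idem_mem hE' k v)
      have hz : (B ^ (d - i + 2)) (C (E' k v)) = 0 :=
        LR.lowers_pow_zero hBlow (d - i + 2) (k + 1) (by omega) (by omega) _ hCw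
      have hsum2 : ∑ m ∈ Finset.range (d + 1), (B ^ (d - i + 2)) (E m (C (E' k v))) = 0 := by
        rw [← map_sum, LR.idem_sum hE]; exact hz
      have hterm : (B ^ (d - i + 2)) (E j (C (E' k v))) = 0 := by
        refine LR.pick_term hE (Finset.mem_range.mpr (by omega))
          ((LR.raises_pow hBraise (d - i + 2) j (by omega) _ (LR.idem_mem hE j _)).1)
          ?_ hsum2
        intro m hm hmj
        by_cases hms : m + (d - i + 2) ≤ d
        · exact (hE (j + (d - i + 2))).2 (m + (d - i + 2)) (by omega) _
            ((LR.raises_pow hBraise (d - i + 2) m hms _ (LR.idem_mem hE m _)).1)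
        · rw [LR.raises_pow_zero hBraise (d - i + 2) m
            (Nat.lt_succ_iff.mp (Finset.mem_range.mp hm)) (by omega) _
            (LR.idem_mem hE m _), map_zero]
      exact (LR.raises_pow hBraise (d - i + 2) j (by omega) _ (LR.idem_mem hE j _)).2 hterm
  -- G3 : the diagonal components vanish (bipartite, via traces)
  have G3 : ∀ i ≤ d, ∀ v ∈ DAB.sub i, E i (C v) = 0 := by
    intro i hi v hv
    have hfr := DAB.finrank_eq_one i hi
    have hnb : DAB.sub i ≠ ⊥ := fun h => by rw [h] at hfr; simp at hfr
    obtain ⟨u, hu, hune⟩ := Submodule.exists_mem_ne_zero_of_ne_bot hnb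
    obtain ⟨c, hc⟩ := LR.mem_one_dim hfr hu hune (LR.idem_mem hE i (C u))
    have hEii : E i * E i = E i :=
      LinearMap.ext fun w => (hE i).1 (E i w) (LR.idem_mem hE i w)
    have hop : E i * (C * E i) = c • E i := by
      refine LR.end_ext DAB fun j hj w hw => ?_
      by_cases hji : j = i
      · subst hji
        have hEw : E j w = w := (hE j).1 w hw
        have hkey : E j (C w) = c • w := by
          obtain ⟨t, rfl⟩ := LR.mem_one_dim hfr hu hune hw
          rw [map_smul, map_smul, hc, smul_comm]
        show E j (C (E j w)) = (c • E j) w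
        rw [hEw, hkey, LinearMap.smul_apply, hEw]
      · have hEw : E i w = 0 := (hE i).2 j hji w hw
        show E i (C (E i w)) = (c • E i) w
        rw [hEw, map_zero, map_zero, LinearMap.smul_apply, hEw, smul_zero]
    have hproj : LinearMap.IsProj (DAB.sub i) (E i) :=
      ⟨fun x => LR.idem_mem hE i x, fun x hx => (hE i).1 x hx⟩
    have htrE : LinearMap.trace F V (E i) = 1 := by
      rw [hproj.trace, hfr, Nat.cast_one]
    have htr0 : LinearMap.trace F V (C * E i) = 0 := (hbip i hi).1
    have hc0 : c = 0 := by
      have h1 : LinearMap.trace F V (E i * (C * E i)) = c := by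
        rw [hop, map_smul, htrE, smul_eq_mul, mul_one]
      rw [LinearMap.trace_mul_comm, mul_assoc, hEii, htr0] at h1
      exact h1.symm
    obtain ⟨t, rfl⟩ := LR.mem_one_dim hfr hu hune hv
    rw [map_smul, map_smul, hc, hc0, zero_smul, smul_zero]
  -- parity : components of C v with the same parity as i vanish
  have hCpar : ∀ i ≤ d, ∀ v ∈ DAB.sub i, ∀ j ≤ d, j % 2 = i % 2 → E j (C v) = 0 := by
    intro i hi v hv j hj hpar
    have htri : j = i ∨ i + 2 ≤ j ∨ j + 2 ≤ i := by omega
    rcases htri with rfl | h | h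
    · exact G3 j hj v hv
    · exact G1 i hi v hv j hj h
    · exact G2 i hi v hv j hj h
  -- action of J on the (A,B)-decomposition
  have hJapply : ∀ i ≤ d, ∀ v ∈ DAB.sub i, J v = if i % 2 = 0 then v else 0 := by
    intro i hi v hv
    rw [hJ, LinearMap.sum_apply]
    by_cases h : i % 2 = 0
    · obtain ⟨m, rfl⟩ : ∃ m, i = 2 * m := ⟨i / 2, by omega⟩
      rw [Finset.sum_eq_single_of_mem m (Finset.mem_range.mpr (by omega))
        (fun b _ hb => (hE (2 * b)).2 (2 * m) (by omega) v hv)]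
      rw [(hE (2 * m)).1 v hv, if_pos h]
    · rw [if_neg h]
      exact Finset.sum_eq_zero fun b _ => (hE (2 * b)).2 i (by omega) v hv
  -- J C v
  have hJC : ∀ i ≤ d, ∀ v ∈ DAB.sub i, J (C v) = if i % 2 = 0 then 0 else C v := by
    intro i hi v hv
    have hdec : C v = ∑ j ∈ Finset.range (d + 1), E j (C v) := (LR.idem_sum hE _).symm
    by_cases h : i % 2 = 0
    · rw [if_pos h]
      conv_lhs => rw [hdec]
      rw [map_sum]
      refine Finset.sum_eq_zero fun j hj => ?_
      have hjd : j ≤ d := Nat.lt_succ_iff.mp (Finset.mem_range.mp hj)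
      by_cases hp : j % 2 = 0
      · rw [hCpar i hi v hv j hjd (by omega), map_zero]
      · rw [hJapply j hjd _ (LR.idem_mem hE j _), if_neg hp]
    · rw [if_neg h]
      conv_lhs => rw [hdec]
      rw [map_sum]
      conv_rhs => rw [hdec]
      refine Finset.sum_congr rfl fun j hj => ?_
      have hjd : j ≤ d := Nat.lt_succ_iff.mp (Finset.mem_range.mp hj)
      by_cases hp : j % 2 = 0
      · rw [hJapply j hjd _ (LR.idem_mem hE j _), if_pos hp]
      · rw [hCpar i hi v hv j hjd (by omega), map_zero]
  -- operator identities
  have hJJ : J * J = J := by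
    refine LR.end_ext DAB fun i hi v hv => ?_
    show J (J v) = J v
    rw [hJapply i hi v hv]
    by_cases h : i % 2 = 0
    · rw [if_pos h, hJapply i hi v hv, if_pos h]
    · rw [if_neg h, map_zero]
  have hP4 : (1 - J) * B = B * J := by
    refine LR.end_ext DAB fun i hi v hv => ?_
    simp only [Module.End.mul_apply, LinearMap.sub_apply, Module.End.one_apply]
    rcases Nat.lt_or_ge i d with hlt | hge
    · have hBv : B v ∈ DAB.sub (i + 1) := LR.raises_mem hBraise hi hv
      rw [hJapply (i + 1) (by omega) _ hBv, hJapply i hi v hv]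
      by_cases h : i % 2 = 0
      · rw [if_neg (by omega), if_pos h, sub_zero]
      · rw [if_pos (by omega), if_neg h, map_zero, sub_self]
    · have hieq : i = d := by omega
      subst hieq
      rw [LR.raises_zero hBraise hv, map_zero, sub_zero, hJapply i le_rfl v hv]
      by_cases h : i % 2 = 0
      · rw [if_pos h]; exact (LR.raises_zero hBraise hv).symm
      · rw [if_neg h, map_zero]
  have hJBeq : J * B = B - B * J := by
    have h4 := hP4
    rw [sub_mul, one_mul] at h4
    rw [← h4]
    abel
  have hP1 : J * (B * J) = 0 := by
    rw [← mul_assoc, hJBeq, sub_mul, mul_assoc, hJJ, sub_self]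
  have hP2 : J * (C * J) = 0 := by
    refine LR.end_ext DAB fun i hi v hv => ?_
    simp only [Module.End.mul_apply, LinearMap.zero_apply]
    rw [hJapply i hi v hv]
    by_cases h : i % 2 = 0
    · rw [if_pos h, hJC i hi v hv, if_pos h]
    · rw [if_neg h, map_zero, map_zero]
  have hP3 : (1 - J) * (C * (1 - J)) = 0 := by
    refine LR.end_ext DAB fun i hi v hv => ?_
    simp only [Module.End.mul_apply, LinearMap.sub_apply, Module.End.one_apply,
      LinearMap.zero_apply]
    rw [hJapply i hi v hv]
    by_cases h : i % 2 = 0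
    · rw [if_pos h, sub_self, map_zero, map_zero, sub_zero]
    · rw [if_neg h, sub_zero, hJC i hi v hv, if_neg h, sub_self]
  -- algebra
  have h1JJ : (1 - J) * J = 0 := by rw [sub_mul, one_mul, hJJ, sub_self]
  have hCJ' : C' * J = cOut • (C * J) := by
    rw [hC']
    simp only [add_mul, smul_mul_assoc, mul_assoc]
    rw [hJJ, h1JJ, mul_zero, smul_zero, add_zero]
  have hBJ' : B' * J = bOut • (B * J) := by
    rw [hB']
    simp only [add_mul, smul_mul_assoc, mul_assoc]
    rw [hJJ, h1JJ, mul_zero, smul_zero, add_zero]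
  have h1CJ : (1 - J) * (C * J) = C * J := by rw [sub_mul, one_mul, hP2, sub_zero]
  have hB'CJ : B' * (C * J) = bIn • (B * (C * J)) := by
    rw [hB']
    simp only [add_mul, smul_mul_assoc, mul_assoc]
    rw [hP2, mul_zero, smul_zero, zero_add, h1CJ]
  have hJBCJ : J * (B * (C * J)) = B * (C * J) := by
    rw [← mul_assoc, hJBeq, sub_mul, mul_assoc, hP2, mul_zero, sub_zero]
  have h1BCJ : (1 - J) * (B * (C * J)) = 0 := by
    rw [sub_mul, one_mul, hJBCJ, sub_self]
  have hA'BCJ : A' * (B * (C * J)) = aOut • (A * (B * (C * J))) := by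
    rw [hA']
    simp only [add_mul, smul_mul_assoc, mul_assoc]
    rw [hJBCJ, h1BCJ, mul_zero, smul_zero, add_zero]
  have h1BJ : (1 - J) * (B * J) = B * J := by rw [sub_mul, one_mul, hP1, sub_zero]
  have hC'BJ : C' * (B * J) = cIn • (C * (B * J)) := by
    rw [hC']
    simp only [add_mul, smul_mul_assoc, mul_assoc]
    rw [hP1, mul_zero, smul_zero, zero_add, h1BJ]
  have h1CBJ : (1 - J) * (C * (B * J)) = 0 := by
    calc (1 - J) * (C * (B * J)) = (1 - J) * (C * ((1 - J) * (B * J))) := by rw [h1BJ]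
      _ = ((1 - J) * (C * (1 - J))) * (B * J) := by simp only [mul_assoc]
      _ = 0 := by rw [hP3, zero_mul]
  have hJCBJ : J * (C * (B * J)) = C * (B * J) := by
    have h := h1CBJ
    rw [sub_mul, one_mul, sub_eq_zero] at h
    exact h.symm
  have hA'CBJ : A' * (C * (B * J)) = aOut • (A * (C * (B * J))) := by
    rw [hA']
    simp only [add_mul, smul_mul_assoc, mul_assoc]
    rw [hJCBJ, h1CBJ, mul_zero, smul_zero, add_zero]
  have main1 : A' * B' * C' * J = (aOut * bIn * cOut) • (A * B * C * J) := by
    calc A' * B' * C' * J = A' * (B' * (C' * J)) := by simp only [mul_assoc]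
      _ = A' * (B' * (cOut • (C * J))) := by rw [hCJ']
      _ = cOut • (A' * (B' * (C * J))) := by rw [mul_smul_comm, mul_smul_comm]
      _ = cOut • (A' * (bIn • (B * (C * J)))) := by rw [hB'CJ]
      _ = (cOut * bIn) • (A' * (B * (C * J))) := by rw [mul_smul_comm, smul_smul]
      _ = (cOut * bIn) • (aOut • (A * (B * (C * J)))) := by rw [hA'BCJ]
      _ = (aOut * bIn * cOut) • (A * (B * (C * J))) := by
          rw [smul_smul]; congr 1; ring
      _ = (aOut * bIn * cOut) • (A * B * C * J) := by simp only [mul_assoc]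
  have main2 : A' * C' * B' * J = (aOut * cIn * bOut) • (A * C * B * J) := by
    calc A' * C' * B' * J = A' * (C' * (B' * J)) := by simp only [mul_assoc]
      _ = A' * (C' * (bOut • (B * J))) := by rw [hBJ']
      _ = bOut • (A' * (C' * (B * J))) := by rw [mul_smul_comm, mul_smul_comm]
      _ = bOut • (A' * (cIn • (C * (B * J)))) := by rw [hC'BJ]
      _ = (bOut * cIn) • (A' * (C * (B * J))) := by rw [mul_smul_comm, smul_smul]
      _ = (bOut * cIn) • (aOut • (A * (C * (B * J)))) := by rw [hA'CBJ]
      _ = (aOut * cIn * bOut) • (A * (C * (B * J))) := by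
          rw [smul_smul]; congr 1; ring
      _ = (aOut * cIn * bOut) • (A * C * B * J) := by simp only [mul_assoc]
  exact ⟨main1, main2,
    ⟨aOut * bIn * cOut, mul_ne_zero (mul_ne_zero haOut hbIn) hcOut, main1⟩,
    ⟨aOut * cIn * bOut, mul_ne_zero (mul_ne_zero haOut hcIn) hbOut, main2⟩⟩
end

section
/- Let (A,B,C) be a nonbipartite normalized LR triple on V, with {E_i} the idempotent sequence of the (A,B)-decomposition, a_i = tr(C E_i), and {φ_i} the parameter sequence of the LR pair (A,B) (with φ_0 = 0 = φ_{d+1}). Then a_i = φ_{d−i+1} − φ_{d−i} for 0 ≤ i ≤ d. -/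
variable {F : Type*} [Field F] {V : Type*} [AddCommGroup V] [Module F V]

lemma my_smul_cancel {x : V} (hx : x ≠ 0) {s t : F} (h : s • x = t • x) : s = t := by
  by_contra hne
  have h0 : (s - t) • x = 0 := by rw [sub_smul, h, sub_self]
  rcases smul_eq_zero.mp h0 with h1 | h2
  · exact hne (sub_eq_zero.mp h1)
  · exact hx h2

lemma my_exists_smul_of_mem [FiniteDimensional F V]
    {S : Submodule F V} (hS : Module.finrank F S = 1) {x : V} (hx : x ∈ S) (hx0 : x ≠ 0)
    {y : V} (hy : y ∈ S) : ∃ t : F, y = t • x := by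
  have hle : Submodule.span F {x} ≤ S := by rwa [Submodule.span_singleton_le_iff_mem]
  have heq : Submodule.span F {x} = S := by
    apply Submodule.eq_of_le_of_finrank_le hle
    rw [hS, finrank_span_singleton hx0]
  rw [← heq] at hy
  obtain ⟨t, ht⟩ := Submodule.mem_span_singleton.mp hy
  exact ⟨t, ht.symm⟩

lemma my_exists_basis_of_chain [FiniteDimensional F V] {d : ℕ}
    (hdim : Module.finrank F V = d + 1)
    (D : LRDecomp F V d) (v : ℕ → V) (σ : ℕ → ℕ)
    (hσ : ∀ j ≤ d, σ j ≤ d)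
    (hinj : ∀ j ≤ d, ∀ k ≤ d, σ j = σ k → j = k)
    (hmem : ∀ j ≤ d, v j ∈ D.sub (σ j))
    (hne : ∀ j ≤ d, v j ≠ 0) :
    ∃ b : Module.Basis (Fin (d + 1)) F V, ∀ j : Fin (d + 1), b j = v (j : ℕ) := by
  have hind := D.isInternal.submodule_iSupIndep
  let σ' : Fin (d + 1) → Fin (d + 1) :=
    fun j => ⟨σ (j : ℕ), Nat.lt_succ_of_le (hσ (j : ℕ) (Nat.lt_succ_iff.mp j.isLt))⟩
  have hinj' : Function.Injective σ' := by
    intro a b hab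
    have h1 : σ (a : ℕ) = σ (b : ℕ) := congrArg Fin.val hab
    have h2 := hinj (a : ℕ) (Nat.lt_succ_iff.mp a.isLt) (b : ℕ) (Nat.lt_succ_iff.mp b.isLt) h1
    exact Fin.ext h2
  have hli : LinearIndependent F (fun j : Fin (d + 1) => v (j : ℕ)) := by
    apply iSupIndep.linearIndependent (fun j : Fin (d + 1) => D.sub (σ (j : ℕ)))
    · exact hind.comp hinj'
    · intro j; exact hmem (j : ℕ) (Nat.lt_succ_iff.mp j.isLt)
    · intro j; exact hne (j : ℕ) (Nat.lt_succ_iff.mp j.isLt)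
  have hcard : Fintype.card (Fin (d + 1)) = Module.finrank F V := by simp [hdim]
  refine ⟨basisOfLinearIndependentOfCardEqFinrank hli hcard, fun j => ?_⟩
  rw [coe_basisOfLinearIndependentOfCardEqFinrank]

lemma my_trace_mul_idem [FiniteDimensional F V] {d : ℕ}
    (b : Module.Basis (Fin (d + 1)) F V) (Ei X : Module.End F V) (j₀ : Fin (d + 1))
    (h1 : Ei (b j₀) = b j₀) (h0 : ∀ j, j ≠ j₀ → Ei (b j) = 0) :
    LinearMap.trace F V (X * Ei) = b.repr (X (b j₀)) j₀ := by
  classical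
  rw [LinearMap.trace_eq_matrix_trace F b]
  simp only [Matrix.trace, Matrix.diag]
  rw [Finset.sum_eq_single_of_mem j₀ (Finset.mem_univ _)]
  · rw [LinearMap.toMatrix_apply, Module.End.mul_apply, h1]
  · intro j _ hj
    rw [LinearMap.toMatrix_apply, Module.End.mul_apply, h0 j hj, map_zero]
    simp

lemma my_pattern1 {d : ℕ}
    (b : Module.Basis (Fin (d + 1)) F V) (u w : ℕ → V) (α c : ℕ → F) (X : Module.End F V)
    (hα0 : α 0 = 1)
    (htoep : ∀ j ≤ d, w j = ∑ k ∈ Finset.range (j + 1), α (j - k) • u k)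
    (hb : ∀ j : Fin (d + 1), b j = w (j : ℕ))
    (hX : ∀ k < d, X (u k) = c k • u (k + 1))
    (hXd : X (u d) = 0) (hcd : c d = 0)
    (i : Fin (d + 1)) :
    b.repr (X (b i)) i
      = α 1 * ((if (i : ℕ) = 0 then 0 else c ((i : ℕ) - 1)) - c (i : ℕ)) := by
  classical
  have hrepr_w : ∀ k ≤ d, ∀ t : Fin (d + 1),
      b.repr (w k) t = if (t : ℕ) = k then 1 else 0 := by
    intro k hk t
    have hwk : w k = b ⟨k, by omega⟩ := (hb ⟨k, by omega⟩).symm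
    rw [hwk, b.repr_self, Finsupp.single_apply]
    by_cases h : (t : ℕ) = k
    · rw [if_pos (by exact Fin.ext h.symm), if_pos h]
    · rw [if_neg (by simp [Fin.ext_iff]; omega), if_neg h]
  have hueq : ∀ m ≤ d, u m = w m - ∑ k ∈ Finset.range m, α (m - k) • u k := by
    intro m hm
    have h1 := htoep m hm
    rw [Finset.sum_range_succ, Nat.sub_self, hα0, one_smul] at h1
    rw [h1]; abel
  have L : ∀ m, m ≤ d → ∀ t : Fin (d + 1), m ≤ (t : ℕ) →
      b.repr (u m) t = if (t : ℕ) = m then 1 else 0 := by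
    intro m
    induction m using Nat.strong_induction_on with
    | _ m IH =>
      intro hm t ht
      rw [hueq m hm, map_sub, Finsupp.sub_apply, map_sum, Finset.sum_apply']
      rw [hrepr_w m hm t]
      rw [Finset.sum_eq_zero, sub_zero]
      intro k hk
      rw [Finset.mem_range] at hk
      rw [map_smul, Finsupp.smul_apply, IH k hk (by omega) t (by omega), smul_eq_mul,
        if_neg (by omega), mul_zero]
  have L3 : ∀ m, m + 1 ≤ d → ∀ t : Fin (d + 1), (t : ℕ) = m →
      b.repr (u (m + 1)) t = -α 1 := by
    intro m hm t ht
    rw [hueq (m + 1) hm, map_sub, Finsupp.sub_apply, map_sum, Finset.sum_apply']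
    rw [hrepr_w (m + 1) hm t, if_neg (by omega)]
    rw [Finset.sum_range_succ, Finset.sum_eq_zero, zero_add]
    · rw [map_smul, Finsupp.smul_apply, L m (by omega) t (by omega), if_pos ht,
        smul_eq_mul, mul_one, show m + 1 - m = 1 by omega]
      ring
    · intro k hk
      rw [Finset.mem_range] at hk
      rw [map_smul, Finsupp.smul_apply, L k (by omega) t (by omega), smul_eq_mul,
        if_neg (by omega), mul_zero]
  have hnd : (i : ℕ) ≤ d := Nat.lt_succ_iff.mp i.isLt
  have expand : b.repr (X (b i)) i
      = ∑ k ∈ Finset.range ((i : ℕ) + 1), α ((i : ℕ) - k) * b.repr (X (u k)) i := by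
    rw [hb i, htoep (i : ℕ) hnd, map_sum, map_sum, Finset.sum_apply']
    refine Finset.sum_congr rfl fun k _ => ?_
    rw [map_smul, map_smul, Finsupp.smul_apply, smul_eq_mul]
  rw [expand]
  rcases Nat.eq_zero_or_pos (i : ℕ) with h0 | hpos
  · rw [h0, Finset.sum_range_one, Nat.sub_zero, hα0, one_mul, if_pos rfl]
    rcases Nat.eq_zero_or_pos d with hd0 | hdpos
    · rw [hd0] at hXd hcd
      rw [hXd, map_zero, hcd]
      simp
    · rw [hX 0 hdpos, map_smul, Finsupp.smul_apply, L3 0 hdpos i h0, smul_eq_mul]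
      ring
  · obtain ⟨m, hm⟩ : ∃ m, (i : ℕ) = m + 1 := ⟨(i : ℕ) - 1, by omega⟩
    rw [hm, Finset.sum_range_succ, Finset.sum_range_succ]
    rw [Finset.sum_eq_zero, zero_add]
    · have t1 : α (m + 1 - m) * b.repr (X (u m)) i = α 1 * c m := by
        rw [show m + 1 - m = 1 by omega, hX m (by omega), map_smul, Finsupp.smul_apply,
          L (m + 1) (by omega) i (by omega), if_pos (by omega), smul_eq_mul, mul_one]
      have t2 : α (m + 1 - (m + 1)) * b.repr (X (u (m + 1))) i = -(α 1 * c (m + 1)) := by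
        rw [Nat.sub_self, hα0, one_mul]
        rcases Nat.lt_or_ge (m + 1) d with hlt | hge
        · rw [hX (m + 1) hlt, map_smul, Finsupp.smul_apply, L3 (m + 1) hlt i (by omega),
            smul_eq_mul]
          ring
        · have : m + 1 = d := by omega
          rw [this, hXd, map_zero, Finsupp.zero_apply, hcd]
          ring
      rw [t1, t2, if_neg (by omega), show m + 1 - 1 = m by omega]
      ring
    · intro k hk
      rw [Finset.mem_range] at hk
      rw [hX k (by omega), map_smul, Finsupp.smul_apply,
        L (k + 1) (by omega) i (by omega), smul_eq_mul, if_neg (by omega), mul_zero, mul_zero]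

lemma my_pattern2 {d : ℕ}
    (b : Module.Basis (Fin (d + 1)) F V) (u w : ℕ → V) (α c : ℕ → F) (X : Module.End F V)
    (hα0 : α 0 = 1)
    (htoep : ∀ j ≤ d, w j = ∑ k ∈ Finset.range (j + 1), α (j - k) • u k)
    (hb : ∀ j : Fin (d + 1), b j = u (j : ℕ))
    (hX : ∀ k < d, X (w k) = c (k + 1) • w (k + 1))
    (hXd : X (w d) = 0) (hc0 : c 0 = 0) (hcd : c (d + 1) = 0)
    (i : Fin (d + 1)) :
    b.repr (X (u (i : ℕ))) i = α 1 * (c ((i : ℕ) + 1) - c (i : ℕ)) := by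
  classical
  have hrepr_u : ∀ k ≤ d, ∀ t : Fin (d + 1),
      b.repr (u k) t = if (t : ℕ) = k then 1 else 0 := by
    intro k hk t
    have huk : u k = b ⟨k, by omega⟩ := (hb ⟨k, by omega⟩).symm
    rw [huk, b.repr_self, Finsupp.single_apply]
    by_cases h : (t : ℕ) = k
    · rw [if_pos (by exact Fin.ext h.symm), if_pos h]
    · rw [if_neg (by simp [Fin.ext_iff]; omega), if_neg h]
  have P0 : ∀ j ≤ d, ∀ t : Fin (d + 1),
      b.repr (w j) t = if (t : ℕ) ≤ j then α (j - (t : ℕ)) else 0 := by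
    intro j hj t
    rw [htoep j hj, map_sum, Finset.sum_apply']
    have hterm : ∀ k ∈ Finset.range (j + 1),
        b.repr (α (j - k) • u k) t = α (j - k) * (if (t : ℕ) = k then 1 else 0) := by
      intro k hk
      rw [Finset.mem_range] at hk
      rw [map_smul, Finsupp.smul_apply, hrepr_u k (by omega) t, smul_eq_mul]
    rw [Finset.sum_congr rfl hterm]
    by_cases h : (t : ℕ) ≤ j
    · rw [if_pos h, Finset.sum_eq_single_of_mem (t : ℕ) (Finset.mem_range.mpr (by omega))]
      · rw [if_pos rfl, mul_one]
      · intro k _ hk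
        rw [if_neg (by omega), mul_zero]
    · rw [if_neg h, Finset.sum_eq_zero]
      intro k hk
      rw [Finset.mem_range] at hk
      rw [if_neg (by omega), mul_zero]
  have hueq : ∀ m ≤ d, u m = w m - ∑ k ∈ Finset.range m, α (m - k) • u k := by
    intro m hm
    have h1 := htoep m hm
    rw [Finset.sum_range_succ, Nat.sub_self, hα0, one_smul] at h1
    rw [h1]; abel
  have hexp : ∀ k ≤ d, ∀ t : Fin (d + 1), b.repr (X (u k)) t
      = b.repr (X (w k)) t - ∑ l ∈ Finset.range k, α (k - l) * b.repr (X (u l)) t := by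
    intro k hk t
    rw [hueq k hk, map_sub, map_sum, map_sub, map_sum, Finsupp.sub_apply, Finset.sum_apply']
    congr 1
    refine Finset.sum_congr rfl fun l _ => ?_
    rw [map_smul, map_smul, Finsupp.smul_apply, smul_eq_mul]
  have hXw : ∀ k ≤ d, ∀ t : Fin (d + 1), b.repr (X (w k)) t
      = c (k + 1) * (if (t : ℕ) ≤ k + 1 ∧ k + 1 ≤ d then α (k + 1 - (t : ℕ)) else 0) := by
    intro k hk t
    rcases Nat.lt_or_ge k d with hlt | hge
    · rw [hX k hlt, map_smul, Finsupp.smul_apply, P0 (k + 1) (by omega) t, smul_eq_mul]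
      by_cases h : (t : ℕ) ≤ k + 1
      · rw [if_pos h, if_pos ⟨h, by omega⟩]
      · rw [if_neg h, if_neg (by omega)]
    · have hkd : k = d := by omega
      rw [hkd, hXd, map_zero, if_neg (by omega), mul_zero]
      simp
  have P1 : ∀ k, k ≤ d → ∀ t : Fin (d + 1), k + 1 < (t : ℕ) →
      b.repr (X (u k)) t = 0 := by
    intro k
    induction k using Nat.strong_induction_on with
    | _ k IH =>
      intro hk t ht
      rw [hexp k hk t, hXw k hk t, if_neg (by omega), mul_zero, zero_sub,
        Finset.sum_eq_zero, neg_zero]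
      intro l hl
      rw [Finset.mem_range] at hl
      rw [IH l hl (by omega) t (by omega), mul_zero]
  have P2 : ∀ k, k + 1 ≤ d → ∀ t : Fin (d + 1), (t : ℕ) = k + 1 →
      b.repr (X (u k)) t = c (k + 1) := by
    intro k hk t ht
    rw [hexp k (by omega) t, hXw k (by omega) t, if_pos ⟨by omega, hk⟩,
      show k + 1 - (t : ℕ) = 0 by omega, hα0, mul_one, Finset.sum_eq_zero, sub_zero]
    intro l hl
    rw [Finset.mem_range] at hl
    rw [P1 l (by omega) t (by omega), mul_zero]
  have hnd : (i : ℕ) ≤ d := Nat.lt_succ_iff.mp i.isLt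
  rw [hexp (i : ℕ) hnd i, hXw (i : ℕ) hnd i]
  have hfirst : c ((i : ℕ) + 1) *
      (if (i : ℕ) ≤ (i : ℕ) + 1 ∧ (i : ℕ) + 1 ≤ d then α ((i : ℕ) + 1 - (i : ℕ)) else 0)
      = c ((i : ℕ) + 1) * α 1 := by
    rcases Nat.lt_or_ge (i : ℕ) d with hlt | hge
    · rw [if_pos ⟨by omega, by omega⟩, show (i : ℕ) + 1 - (i : ℕ) = 1 by omega]
    · have : (i : ℕ) = d := by omega
      rw [this, hcd, if_neg (by omega)]
      ring
  rw [hfirst]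
  rcases Nat.eq_zero_or_pos (i : ℕ) with h0 | hpos
  · rw [h0, Finset.range_zero, Finset.sum_empty, sub_zero, hc0]
    ring
  · obtain ⟨m, hm⟩ : ∃ m, (i : ℕ) = m + 1 := ⟨(i : ℕ) - 1, by omega⟩
    rw [hm, Finset.sum_range_succ, Finset.sum_eq_zero, zero_add]
    · rw [show m + 1 - m = 1 by omega, P2 m (by omega) i (by omega)]
      ring
    · intro l hl
      rw [Finset.mem_range] at hl
      rw [P1 l (by omega) i (by omega), mul_zero]

theorem stmt18
    {F : Type*} [Field F] {V : Type*} [AddCommGroup V] [Module F V]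
    [FiniteDimensional F V] {d : ℕ} (hdim : Module.finrank F V = d + 1)
    (A B C : Module.End F V) (DAB DBC DCA : LRDecomp F V d)
    (hAB : IsLRPairWith A B DAB) (hBC : IsLRPairWith B C DBC) (hCA : IsLRPairWith C A DCA)
    (E E' E'' : ℕ → Module.End F V)
    (hE : IsIdemSeq DAB E) (hE' : IsIdemSeq DBC E') (hE'' : IsIdemSeq DCA E'')
    (hnonbip : ¬ IsBipartite d A B C E E' E'')
    (u₁ w₁ u₂ w₂ u₃ w₃ : ℕ → V) (α α' α'' : ℕ → F)
    (hu₁ : IsLRBasisRev C DBC u₁) (hw₁ : IsLRBasisFor C DCA w₁) (hc₁ : u₁ 0 = w₁ 0)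
    (hα : IsToeplitzTransition d u₁ w₁ α)
    (hu₂ : IsLRBasisRev A DCA u₂) (hw₂ : IsLRBasisFor A DAB w₂) (hc₂ : u₂ 0 = w₂ 0)
    (hα' : IsToeplitzTransition d u₂ w₂ α')
    (hu₃ : IsLRBasisRev B DAB u₃) (hw₃ : IsLRBasisFor B DBC w₃) (hc₃ : u₃ 0 = w₃ 0)
    (hα'' : IsToeplitzTransition d u₃ w₃ α'')
    (hnorm : α 1 = 1 ∧ α' 1 = 1 ∧ α'' 1 = 1)
    (φ : ℕ → F) (hφ : IsParamSeq A B DAB φ) :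
    ∀ i ≤ d, LinearMap.trace F V (C * E i) = φ (d - i + 1) - φ (d - i) := by
  classical
  obtain ⟨hα1, hα'1, hα''1⟩ := hnorm
  -- memberships and nonvanishing
  have hw₁m : ∀ j ≤ d, w₁ j ∈ DCA.sub j := fun j hj => (hw₁.1 j hj).1
  have hw₁n : ∀ j ≤ d, w₁ j ≠ 0 := fun j hj => (hw₁.1 j hj).2
  have hw₂m : ∀ j ≤ d, w₂ j ∈ DAB.sub j := fun j hj => (hw₂.1 j hj).1
  have hw₂n : ∀ j ≤ d, w₂ j ≠ 0 := fun j hj => (hw₂.1 j hj).2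
  have hw₃m : ∀ j ≤ d, w₃ j ∈ DBC.sub j := fun j hj => (hw₃.1 j hj).1
  have hw₃n : ∀ j ≤ d, w₃ j ≠ 0 := fun j hj => (hw₃.1 j hj).2
  have hu₁m : ∀ j ≤ d, u₁ j ∈ DBC.sub (d - j) := fun j hj => (hu₁.1 j hj).1
  have hu₁n : ∀ j ≤ d, u₁ j ≠ 0 := fun j hj => (hu₁.1 j hj).2
  have hu₂m : ∀ j ≤ d, u₂ j ∈ DCA.sub (d - j) := fun j hj => (hu₂.1 j hj).1
  have hu₂n : ∀ j ≤ d, u₂ j ≠ 0 := fun j hj => (hu₂.1 j hj).2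
  have hu₃m : ∀ j ≤ d, u₃ j ∈ DAB.sub (d - j) := fun j hj => (hu₃.1 j hj).1
  have hu₃n : ∀ j ≤ d, u₃ j ≠ 0 := fun j hj => (hu₃.1 j hj).2
  -- the zeroth Toeplitz coefficients equal 1
  have hα0 : α 0 = 1 := by
    have h := hα 0 (Nat.zero_le d)
    rw [Finset.sum_range_one, Nat.sub_self, hc₁] at h
    exact (my_smul_cancel (hw₁n 0 (Nat.zero_le d))
      (by rw [one_smul, ← h] : α 0 • w₁ 0 = (1 : F) • w₁ 0))
  have hα'0 : α' 0 = 1 := by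
    have h := hα' 0 (Nat.zero_le d)
    rw [Finset.sum_range_one, Nat.sub_self, hc₂] at h
    exact (my_smul_cancel (hw₂n 0 (Nat.zero_le d))
      (by rw [one_smul, ← h] : α' 0 • w₂ 0 = (1 : F) • w₂ 0))
  have hα''0 : α'' 0 = 1 := by
    have h := hα'' 0 (Nat.zero_le d)
    rw [Finset.sum_range_one, Nat.sub_self, hc₃] at h
    exact (my_smul_cancel (hw₃n 0 (Nat.zero_le d))
      (by rw [one_smul, ← h] : α'' 0 • w₃ 0 = (1 : F) • w₃ 0))
  -- the parameter sequence ψ of the LR pair (C,A)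
  have hψex : ∀ k : ℕ, ∃ t : F, k < d → A (w₁ k) = t • w₁ (k + 1) := by
    intro k
    by_cases hk : k < d
    · have h1 : A (w₁ k) ∈ DCA.sub (k + 1) := by
        have h2 := hCA.2 k (by omega)
        rw [← h2]
        exact Submodule.mem_map_of_mem (hw₁m k (by omega))
      obtain ⟨t, ht⟩ := my_exists_smul_of_mem (DCA.finrank_eq_one (k + 1) (by omega))
        (hw₁m (k + 1) (by omega)) (hw₁n (k + 1) (by omega)) h1
      exact ⟨t, fun _ => ht⟩
    · exact ⟨0, fun h => absurd h hk⟩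
  choose ψ₀ hψ₀ using hψex
  set ψ : ℕ → F := fun j => if 1 ≤ j ∧ j ≤ d then ψ₀ (j - 1) else 0 with hψdef
  have hψ0 : ψ 0 = 0 := by simp only [hψdef]; rw [if_neg (by omega)]
  have hψtop : ψ (d + 1) = 0 := by simp only [hψdef]; rw [if_neg (by omega)]
  have hAw₁ : ∀ k < d, A (w₁ k) = ψ (k + 1) • w₁ (k + 1) := by
    intro k hk
    have h1 : ψ (k + 1) = ψ₀ k := by
      simp only [hψdef]
      rw [if_pos ⟨by omega, by omega⟩, Nat.add_sub_cancel]
    rw [h1]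
    exact hψ₀ k hk
  have hAw₁d : A (w₁ d) = 0 := by
    have h1 := hCA.2 d le_rfl
    rw [DCA.eq_bot_of_gt (d + 1) (by omega)] at h1
    have h2 : A (w₁ d) ∈ Submodule.map A (DCA.sub d) :=
      Submodule.mem_map_of_mem (hw₁m d le_rfl)
    rw [h1] at h2
    exact Submodule.mem_bot F |>.mp h2
  -- C acts on the u₂-chain with coefficients ψ (d - k)
  have hCu₂ : ∀ k < d, C (u₂ k) = ψ (d - k) • u₂ (k + 1) := by
    intro k hk
    obtain ⟨μ, hμ⟩ := my_exists_smul_of_mem (DCA.finrank_eq_one (d - (k + 1)) (by omega))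
      (hw₁m (d - (k + 1)) (by omega)) (hw₁n (d - (k + 1)) (by omega))
      (hu₂m (k + 1) (by omega))
    have hA : A (u₂ (k + 1)) = u₂ k := by
      have h1 := hu₂.2 (k + 1) (by omega) (by omega)
      rwa [Nat.add_sub_cancel] at h1
    have hAw : A (w₁ (d - (k + 1))) = ψ (d - k) • w₁ (d - k) := by
      have h1 := hAw₁ (d - (k + 1)) (by omega)
      rwa [show d - (k + 1) + 1 = d - k by omega] at h1
    have hu₂k : u₂ k = μ • (ψ (d - k) • w₁ (d - k)) := by
      rw [← hA, hμ, map_smul, hAw]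
    have hCw : C (w₁ (d - k)) = w₁ (d - (k + 1)) := by
      have h1 := hw₁.2 (d - k) (by omega) (by omega)
      rwa [show d - k - 1 = d - (k + 1) by omega] at h1
    rw [hu₂k, map_smul, map_smul, hCw, hμ, smul_smul, smul_smul, mul_comm]
  have hCu₂d : C (u₂ d) = 0 := by
    have hmem : u₂ d ∈ DCA.sub 0 := by
      have h1 := hu₂m d le_rfl
      rwa [Nat.sub_self] at h1
    have h2 : C (u₂ d) ∈ Submodule.map C (DCA.sub 0) := Submodule.mem_map_of_mem hmem
    rw [hCA.1.1] at h2
    exact Submodule.mem_bot F |>.mp h2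
  -- A acts on the u₃-chain with coefficients φ (d - k)
  have hAu₃ : ∀ k < d, A (u₃ k) = φ (d - k) • u₃ (k + 1) := by
    intro k hk
    have h1 : A (u₃ k) ∈ DAB.sub (d - (k + 1)) := by
      have h2 := hAB.1.2 (d - (k + 1)) (by omega)
      rw [show d - (k + 1) + 1 = d - k by omega] at h2
      rw [← h2]
      exact Submodule.mem_map_of_mem (hu₃m k (by omega))
    obtain ⟨t, ht⟩ := my_exists_smul_of_mem (DAB.finrank_eq_one (d - (k + 1)) (by omega))
      (hu₃m (k + 1) (by omega)) (hu₃n (k + 1) (by omega)) h1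
    have hBA : B (A (u₃ k)) = φ (d - k) • u₃ k :=
      hφ.2.2 (d - k) (by omega) (by omega) (u₃ k) (hu₃m k (by omega))
    have hBu : B (u₃ (k + 1)) = u₃ k := by
      have h3 := hu₃.2 (k + 1) (by omega) (by omega)
      rwa [Nat.add_sub_cancel] at h3
    rw [ht, map_smul, hBu] at hBA
    rw [ht, my_smul_cancel (hu₃n k (by omega)) hBA]
  have hAu₃d : A (u₃ d) = 0 := by
    have hmem : u₃ d ∈ DAB.sub 0 := by
      have h1 := hu₃m d le_rfl
      rwa [Nat.sub_self] at h1
    have h2 : A (u₃ d) ∈ Submodule.map A (DAB.sub 0) := Submodule.mem_map_of_mem hmem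
    rw [hAB.1.1] at h2
    exact Submodule.mem_bot F |>.mp h2
  -- the three bases
  obtain ⟨b₂, hb₂⟩ := my_exists_basis_of_chain hdim DAB w₂ (fun j => j)
    (fun j hj => hj) (fun j _ k _ h => h) hw₂m hw₂n
  obtain ⟨b₃, hb₃⟩ := my_exists_basis_of_chain hdim DBC w₃ (fun j => j)
    (fun j hj => hj) (fun j _ k _ h => h) hw₃m hw₃n
  obtain ⟨b₁, hb₁⟩ := my_exists_basis_of_chain hdim DBC u₁ (fun j => d - j)
    (fun j _ => Nat.sub_le d j)
    (fun j hj k hk h => by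
      have h' : d - j = d - k := h
      omega) hu₁m hu₁n
  -- the main computation
  intro i hi
  have massage : ∀ χ : ℕ → F, χ (d + 1) = 0 →
      ((if i = 0 then 0 else χ (d - (i - 1))) - χ (d - i)) = χ (d - i + 1) - χ (d - i) := by
    intro χ hχ
    by_cases h : i = 0
    · rw [if_pos h, h, Nat.sub_zero, hχ]
    · rw [if_neg h, show d - (i - 1) = d - i + 1 by omega]
  set iF : Fin (d + 1) := ⟨i, by omega⟩ with hiF
  set jF : Fin (d + 1) := ⟨d - i, by omega⟩ with hjF
  -- trace of C * E i via the basis w₂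
  have key1 : LinearMap.trace F V (C * E i) = ψ (d - i + 1) - ψ (d - i) := by
    have h1 : E i (b₂ iF) = b₂ iF := by
      rw [hb₂ iF]
      exact (hE i).1 (w₂ i) (hw₂m i hi)
    have h0 : ∀ j, j ≠ iF → E i (b₂ j) = 0 := by
      intro j hj
      rw [hb₂ j]
      refine (hE i).2 (j : ℕ) ?_ (w₂ (j : ℕ)) (hw₂m (j : ℕ) (Nat.lt_succ_iff.mp j.isLt))
      intro hc
      exact hj (Fin.ext hc)
    rw [my_trace_mul_idem b₂ (E i) C iF h1 h0]
    have h2 := my_pattern1 b₂ u₂ w₂ α' (fun k => ψ (d - k)) C hα'0 hα' hb₂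
      (fun k hk => hCu₂ k hk) hCu₂d
      (by show ψ (d - d) = 0; rw [Nat.sub_self]; exact hψ0) iF
    rw [h2, hα'1, one_mul]
    show (if i = 0 then 0 else ψ (d - (i - 1))) - ψ (d - i) = ψ (d - i + 1) - ψ (d - i)
    exact massage ψ hψtop
  -- trace of A * E' i via the basis u₁ : gives ψ-differences
  have key2a : LinearMap.trace F V (A * E' i) = ψ (d - i + 1) - ψ (d - i) := by
    have h1 : E' i (b₁ jF) = b₁ jF := by
      rw [hb₁ jF]
      have hmem : u₁ (d - i) ∈ DBC.sub i := by
        have h2 := hu₁m (d - i) (by omega)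
        rwa [show d - (d - i) = i by omega] at h2
      exact (hE' i).1 (u₁ (d - i)) hmem
    have h0 : ∀ j, j ≠ jF → E' i (b₁ j) = 0 := by
      intro j hj
      rw [hb₁ j]
      have hjd : (j : ℕ) ≤ d := Nat.lt_succ_iff.mp j.isLt
      refine (hE' i).2 (d - (j : ℕ)) ?_ (u₁ (j : ℕ)) (hu₁m (j : ℕ) hjd)
      have hne : (j : ℕ) ≠ d - i := fun hc => hj (Fin.ext hc)
      omega
    rw [my_trace_mul_idem b₁ (E' i) A jF h1 h0, hb₁ jF]
    have h2 := my_pattern2 b₁ u₁ w₁ α ψ A hα0 hα hb₁ hAw₁ hAw₁d hψ0 hψtop jF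
    rw [h2, hα1, one_mul]
  -- trace of A * E' i via the basis w₃ : gives φ-differences
  have key2b : LinearMap.trace F V (A * E' i) = φ (d - i + 1) - φ (d - i) := by
    have h1 : E' i (b₃ iF) = b₃ iF := by
      rw [hb₃ iF]
      exact (hE' i).1 (w₃ i) (hw₃m i hi)
    have h0 : ∀ j, j ≠ iF → E' i (b₃ j) = 0 := by
      intro j hj
      rw [hb₃ j]
      refine (hE' i).2 (j : ℕ) ?_ (w₃ (j : ℕ)) (hw₃m (j : ℕ) (Nat.lt_succ_iff.mp j.isLt))
      intro hc
      exact hj (Fin.ext hc)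
    rw [my_trace_mul_idem b₃ (E' i) A iF h1 h0]
    have h2 := my_pattern1 b₃ u₃ w₃ α'' (fun k => φ (d - k)) A hα''0 hα'' hb₃
      (fun k hk => hAu₃ k hk) hAu₃d
      (by show φ (d - d) = 0; rw [Nat.sub_self]; exact hφ.1) iF
    rw [h2, hα''1, one_mul]
    show (if i = 0 then 0 else φ (d - (i - 1))) - φ (d - i) = φ (d - i + 1) - φ (d - i)
    exact massage φ hφ.2.1
  rw [key1, key2a.symm.trans key2b]
end
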